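/- arXiv:2112.10932 — 8 statements merged into one kernel-verified Lean document; each statement's English description precedes it below -/
import Mathlib

section
/- Let E be a p-energy on a finite set A and B ⊆ A. Define the trace [E]_B : (B → ℝ) → ℝ by [E]_B(f) = inf { E(f') : f' : A → ℝ, f'|_B = f }. Then [E]_B satisfies nonnegativity, convexity, p-homogeneity, invariance under addition of constants, and the Markov property. -/
open Pointwise


/-- A (possibly degenerate) `p`-energy on `A`: nonnegative, convex,
`p`-homogeneous, invariant under addition of constants, and Markovian. -/
def IsPEnergyT {A : Type*} (p : ℝ) (E : (A → ℝ) → ℝ) : Prop :=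
  (∀ f : A → ℝ, 0 ≤ E f) ∧
  (∀ f g : A → ℝ, ∀ t : ℝ, 0 < t → t < 1 →
      E (fun x => t * f x + (1 - t) * g x) ≤ t * E f + (1 - t) * E g) ∧
  (∀ (f : A → ℝ) (t : ℝ), E (fun x => t * f x) = |t| ^ p * E f) ∧
  (∀ (f : A → ℝ) (c : ℝ), E (fun x => f x + c) = E f) ∧
  (∀ f : A → ℝ, E (fun x => min (max (f x) 0) 1) ≤ E f)

/-- The trace `[E]_B` of an energy `E` on `A` to a subset `B ⊆ A`:
`[E]_B f = inf { E f' : f' : A → ℝ, f'|_B = f }`. -/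
noncomputable def traceEnergy {A : Type*} (E : (A → ℝ) → ℝ) (B : Set A) :
    (B → ℝ) → ℝ :=
  fun f => sInf {e | ∃ f' : A → ℝ, (∀ b : B, f' b = f b) ∧ E f' = e}

private lemma inf_combo_aux {s t : Set ℝ} (hs : s.Nonempty) (ht : t.Nonempty)
    (hbs : BddBelow s) (hbt : BddBelow t) {a b X : ℝ} (ha : 0 ≤ a) (hb : 0 ≤ b)
    (h : ∀ x ∈ s, ∀ y ∈ t, X ≤ a * x + b * y) :
    X ≤ a * sInf s + b * sInf t := by
  have h1 : ∀ x ∈ s, X ≤ a * x + b * sInf t := by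
    intro x hx
    have e1 : sInf (b • t) = b • sInf t := Real.sInf_smul_of_nonneg hb t
    rw [smul_eq_mul] at e1
    have h2 : X - a * x ≤ sInf (b • t) := by
      apply le_csInf (ht.smul_set)
      rintro z ⟨y, hy, rfl⟩
      simp only [smul_eq_mul]
      linarith [h x hx y hy]
    linarith [e1 ▸ h2]
  have e1 : sInf (a • s) = a • sInf s := Real.sInf_smul_of_nonneg ha s
  rw [smul_eq_mul] at e1
  have h2 : X - b * sInf t ≤ sInf (a • s) := by
    apply le_csInf (hs.smul_set)
    rintro z ⟨x, hx, rfl⟩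
    simp only [smul_eq_mul]
    linarith [h1 x hx]
  linarith [e1 ▸ h2]

/-- The trace of a `p`-energy to a nonempty subset `B ⊆ A` satisfies
nonnegativity, convexity, `p`-homogeneity, invariance under addition of
constants, and the Markov property. -/
theorem trace_isPEnergyT {A : Type*} [Fintype A] (p : ℝ) (hp : 1 < p)
    (B : Set A) (hB : B.Nonempty)
    (E : (A → ℝ) → ℝ) (hE : IsPEnergyT p E) :
    IsPEnergyT p (traceEnergy E B) := by
  classical
  obtain ⟨hE0, hEconv, hEhom, hEconst, hEmkv⟩ := hE
  set S : (B → ℝ) → Set ℝ :=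
    fun f => {e | ∃ f' : A → ℝ, (∀ b : B, f' b = f b) ∧ E f' = e} with hSdef
  have hT : ∀ f : B → ℝ, traceEnergy E B f = sInf (S f) := fun f => rfl
  have hmem : ∀ (f : B → ℝ) (f' : A → ℝ), (∀ b : B, f' b = f b) → E f' ∈ S f :=
    fun f f' h => ⟨f', h, rfl⟩
  have hne : ∀ f : B → ℝ, (S f).Nonempty := by
    intro f
    refine ⟨E (fun x => if h : x ∈ B then f ⟨x, h⟩ else 0), hmem f _ ?_⟩
    intro b
    show (if h : (b : A) ∈ B then f ⟨b, h⟩ else 0) = f b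
    rw [dif_pos b.2]
  have hbdd : ∀ f : B → ℝ, BddBelow (S f) := by
    intro f
    refine ⟨0, ?_⟩
    rintro e ⟨f', _, rfl⟩
    exact hE0 f'
  refine ⟨?_, ?_, ?_, ?_, ?_⟩
  · -- nonnegativity
    intro f
    rw [hT]
    apply le_csInf (hne f)
    rintro e ⟨f', _, rfl⟩
    exact hE0 f'
  · -- convexity
    intro f g t ht0 ht1
    simp only [hT]
    apply inf_combo_aux (hne f) (hne g) (hbdd f) (hbdd g) ht0.le (by linarith)
    rintro x ⟨f', hf', rfl⟩ y ⟨g', hg', rfl⟩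
    refine le_trans (csInf_le (hbdd _) (hmem _ (fun x => t * f' x + (1 - t) * g' x) ?_))
      (hEconv f' g' t ht0 ht1)
    intro b
    simp [hf' b, hg' b]
  · -- homogeneity
    intro f t
    rcases eq_or_ne t 0 with rfl | htne
    · have hp0 : |(0:ℝ)| ^ p = 0 := by
        rw [abs_zero]
        exact Real.zero_rpow (by linarith)
      simp only [hT, hp0, zero_mul]
      have h0mem : (0:ℝ) ∈ S (fun _ => (0:ℝ)) := by
        refine ⟨fun _ => 0, fun b => rfl, ?_⟩
        have h := hEhom (fun _ => (0:ℝ)) 0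
        rw [abs_zero, Real.zero_rpow (by linarith : p ≠ 0), zero_mul] at h
        simpa using h
      refine le_antisymm (csInf_le (hbdd _) h0mem) ?_
      apply le_csInf (hne _)
      rintro e ⟨f', _, rfl⟩
      exact hE0 f'
    · have hset : S (fun b => t * f b) = |t| ^ p • S f := by
        ext e
        constructor
        · rintro ⟨f', hf', rfl⟩
          refine ⟨E (fun x => (1 / t) * f' x), hmem f _ ?_, ?_⟩
          · intro b; simp only [hf' b]; field_simp
          · have := hEhom (fun x => (1 / t) * f' x) t
            simp only [smul_eq_mul]
            rw [← this]
            congr 1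
            funext x
            field_simp
        · rintro ⟨e0, ⟨g, hg, rfl⟩, rfl⟩
          refine ⟨fun x => t * g x, fun b => by simp [hg b], ?_⟩
          exact hEhom g t
      simp only [hT, hset]
      have := Real.sInf_smul_of_nonneg (by positivity : (0:ℝ) ≤ |t| ^ p) (S f)
      rw [this, smul_eq_mul]
  · -- constants
    intro f c
    have hset : S (fun b => f b + c) = S f := by
      ext e
      constructor
      · rintro ⟨f', hf', rfl⟩
        refine ⟨fun x => f' x - c, fun b => by simp [hf' b], ?_⟩
        have := hEconst (fun x => f' x - c) c
        simpa using this.symm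
      · rintro ⟨f', hf', rfl⟩
        exact ⟨fun x => f' x + c, fun b => by simp [hf' b], hEconst f' c⟩
    simp only [hT, hset]
  · -- Markov
    intro f
    simp only [hT]
    apply le_csInf (hne f)
    rintro e ⟨f', hf', rfl⟩
    refine le_trans (csInf_le (hbdd _)
      (hmem _ (fun x => min (max (f' x) 0) 1) (fun b => by simp [hf' b]))) (hEmkv f')
end

section
/- Let E be a p-energy on a finite set A with p-effective resistance R. For x,y,z ∈ A with R(x,y), R(x,z), R(y,z) < ∞, the triangle inequality R(x,y)^{1/p} ≤ R(x,z)^{1/p} + R(z,y)^{1/p} holds. Consequently, if E is nondegenerate (E(f)=0 iff f constant), then (x,y) ↦ R(x,y)^{1/p} is a metric on A. -/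
open scoped ENNReal

/-- The `p`-effective resistance, with `R(x,x) = 0` and the convention `1/0 = ∞`. -/
noncomputable def pRes {A : Type*} [DecidableEq A]
    (E : (A → ℝ) → ℝ) (x y : A) : ℝ≥0∞ :=
  if x = y then 0
  else (ENNReal.ofReal (sInf (E '' {f : A → ℝ | f x = 0 ∧ f y = 1})))⁻¹

private noncomputable def mE {A : Type*} (E : (A → ℝ) → ℝ) (x y : A) : ℝ :=
  sInf (E '' {f : A → ℝ | f x = 0 ∧ f y = 1})

section Aux

variable {A : Type*} [Fintype A] [DecidableEq A] {p : ℝ} {E : (A → ℝ) → ℝ} {x y z : A}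

private lemma mset_nonempty (hxy : x ≠ y) :
    (E '' {f : A → ℝ | f x = 0 ∧ f y = 1}).Nonempty :=
  ⟨E (fun a => if a = y then 1 else 0),
    ⟨fun a => if a = y then 1 else 0, ⟨by simp [hxy], by simp⟩, rfl⟩⟩

private lemma mset_bdd (hE : IsPEnergyT p E) (x y : A) :
    BddBelow (E '' {f : A → ℝ | f x = 0 ∧ f y = 1}) :=
  ⟨0, by rintro r ⟨f, -, rfl⟩; exact hE.1 f⟩

private lemma energy_lower (hp : 1 < p) (hE : IsPEnergyT p E) (f : A → ℝ)
    (hxy : x ≠ y) : |f y - f x| ^ p * mE E x y ≤ E f := by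
  rcases eq_or_ne (f y) (f x) with h | h
  · have h0 : |f y - f x| = 0 := by rw [h, sub_self, abs_zero]
    rw [h0, Real.zero_rpow (by linarith : p ≠ 0), zero_mul]
    exact hE.1 f
  · set c := f y - f x with hc
    have hc0 : c ≠ 0 := sub_ne_zero.2 h
    set g : A → ℝ := fun a => (f a - f x) / c with hg
    have hgx : g x = 0 := by simp [hg]
    have hgy : g y = 1 := by simp [hg, ← hc, div_self hc0]
    have hmg : mE E x y ≤ E g := csInf_le (mset_bdd hE x y) ⟨g, ⟨hgx, hgy⟩, rfl⟩
    have h2 : f = fun a => c * g a + f x := by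
      funext a
      have : c * ((f a - f x) / c) = f a - f x := by field_simp
      simp only [hg, this]; ring
    have hEf : E f = |c| ^ p * E g := by
      calc E f = E (fun a => c * g a + f x) := by rw [← h2]
        _ = E (fun a => c * g a) := hE.2.2.2.1 _ _
        _ = |c| ^ p * E g := hE.2.2.1 _ _
    rw [hEf]
    exact mul_le_mul_of_nonneg_left hmg (Real.rpow_nonneg (abs_nonneg c) p)

private lemma mE_symm (hp : 1 < p) (hE : IsPEnergyT p E) (x y : A) :
    mE E x y = mE E y x := by
  have key : ∀ u v : A,
      (E '' {f : A → ℝ | f u = 0 ∧ f v = 1}) ⊆ (E '' {f : A → ℝ | f v = 0 ∧ f u = 1}) := by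
    rintro u v r ⟨f, ⟨h1, h2⟩, rfl⟩
    refine ⟨fun a => 1 - f a, ⟨by simp [h2], by simp [h1]⟩, ?_⟩
    have h3 : (fun a => 1 - f a) = fun a => (-1 : ℝ) * f a + 1 := by funext a; ring
    rw [h3, hE.2.2.2.1, hE.2.2.1, abs_neg, abs_one, Real.one_rpow, one_mul]
  unfold mE
  rw [Set.Subset.antisymm (key x y) (key y x)]

private lemma mE_pos (hp : 1 < p) (hE : IsPEnergyT p E)
    (hnd : ∀ f : A → ℝ, E f = 0 ↔ ∃ c : ℝ, ∀ a, f a = c)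
    (hxy : x ≠ y) : 0 < mE E x y := by
  classical
  set K : Set (A → ℝ) := {f | f x = 0 ∧ f y = 1 ∧ ∀ a, f a ∈ Set.Icc (0:ℝ) 1} with hK
  have hKsub : K ⊆ Set.pi Set.univ (fun _ : A => Set.Icc (0:ℝ) 1) :=
    fun f hf a _ => hf.2.2 a
  have hKclosed : IsClosed K := by
    have h1 : IsClosed {f : A → ℝ | f x = 0} :=
      isClosed_eq (continuous_apply x) continuous_const
    have h2 : IsClosed {f : A → ℝ | f y = 1} :=
      isClosed_eq (continuous_apply y) continuous_const
    have h3 : IsClosed {f : A → ℝ | ∀ a, f a ∈ Set.Icc (0:ℝ) 1} := by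
      have he : {f : A → ℝ | ∀ a, f a ∈ Set.Icc (0:ℝ) 1}
          = Set.pi Set.univ (fun _ : A => Set.Icc (0:ℝ) 1) := by
        ext f; simp [Set.mem_pi, Set.mem_Icc, Pi.le_def, forall_and]
      rw [he]
      exact isClosed_set_pi fun _ _ => isClosed_Icc
    have he2 : K = {f : A → ℝ | f x = 0} ∩
        ({f : A → ℝ | f y = 1} ∩ {f : A → ℝ | ∀ a, f a ∈ Set.Icc (0:ℝ) 1}) := by
      ext f; simp [hK, Set.mem_setOf_eq, and_assoc]
    rw [he2]; exact h1.inter (h2.inter h3)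
  have hKcomp : IsCompact K :=
    (isCompact_univ_pi fun _ => isCompact_Icc).of_isClosed_subset hKclosed hKsub
  have hKne : K.Nonempty := by
    refine ⟨fun a => if a = y then 1 else 0, by simp [hxy], by simp, fun a => ?_⟩
    dsimp only
    split_ifs <;> norm_num
  have hconv : ConvexOn ℝ (Set.univ : Set (A → ℝ)) E := by
    refine ⟨convex_univ, fun f _ g _ a b ha hb hab => ?_⟩
    rcases eq_or_lt_of_le ha with h | ha'
    · have hb1 : b = 1 := by linarith
      subst hb1; rw [← h]; simp
    · rcases eq_or_lt_of_le hb with h | hb'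
      · have ha1 : a = 1 := by linarith
        subst ha1; rw [← h]; simp
      · have hb1 : b = 1 - a := by linarith
        subst hb1
        have hlt : a < 1 := by linarith
        have := hE.2.1 f g a ha' hlt
        have heq : a • f + (1 - a) • g = fun t => a * f t + (1 - a) * g t := by
          funext t; simp [smul_eq_mul]
        rw [heq]; exact this
  have hcont : ContinuousOn E K :=
    (hconv.continuousOn isOpen_univ).mono (Set.subset_univ K)
  obtain ⟨f₀, hf₀K, hmin⟩ := hKcomp.exists_isMinOn hKne hcont
  have hf₀pos : 0 < E f₀ := by
    rcases lt_or_eq_of_le (hE.1 f₀) with h | h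
    · exact h
    · exfalso
      obtain ⟨c, hcc⟩ := (hnd f₀).1 h.symm
      have h0 : c = 0 := by rw [← hcc x]; exact hf₀K.1
      have h1 : c = 1 := by rw [← hcc y]; exact hf₀K.2.1
      rw [h0] at h1; norm_num at h1
  refine lt_of_lt_of_le hf₀pos (le_csInf (mset_nonempty hxy) ?_)
  rintro r ⟨g, ⟨hg1, hg2⟩, rfl⟩
  have hcl : (fun a => min (max (g a) 0) 1) ∈ K :=
    ⟨by simp [hg1], by simp [hg2],
      fun a => ⟨le_min (le_max_right _ _) zero_le_one, min_le_right _ _⟩⟩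
  exact le_trans (isMinOn_iff.mp hmin _ hcl) (hE.2.2.2.2 g)

private lemma real_triangle (hp : 1 < p) (hE : IsPEnergyT p E)
    (hxy : x ≠ y) (hxz : x ≠ z) (hzy : z ≠ y)
    (ha : 0 < mE E x z) (hb : 0 < mE E z y) :
    (mE E x y)⁻¹ ^ (1/p) ≤ (mE E x z)⁻¹ ^ (1/p) + (mE E z y)⁻¹ ^ (1/p) := by
  have hp0 : (0:ℝ) < p := by linarith
  set a := mE E x z with hadef
  set b := mE E z y with hbdef
  set B := a⁻¹ ^ (1/p) + b⁻¹ ^ (1/p) with hB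
  have hB1 : 0 < a⁻¹ ^ (1/p) := Real.rpow_pos_of_pos (inv_pos.2 ha) _
  have hB2 : 0 < b⁻¹ ^ (1/p) := Real.rpow_pos_of_pos (inv_pos.2 hb) _
  have hBpos : 0 < B := by rw [hB]; positivity
  have key : ∀ f : A → ℝ, f x = 0 → f y = 1 → (B⁻¹) ^ p ≤ E f := by
    intro f hfx hfy
    have hEf : 0 ≤ E f := hE.1 f
    have h1 : |f z - f x| ≤ (E f * a⁻¹) ^ (1/p) := by
      have hl := energy_lower hp hE f hxz
      have h2 : |f z - f x| ^ p ≤ E f * a⁻¹ := by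
        rw [← div_eq_mul_inv]; exact (le_div_iff₀ ha).2 hl
      calc |f z - f x| = (|f z - f x| ^ p) ^ (1/p) := by
            rw [← Real.rpow_mul (abs_nonneg _), mul_one_div, div_self hp0.ne', Real.rpow_one]
        _ ≤ (E f * a⁻¹) ^ (1/p) :=
            Real.rpow_le_rpow (Real.rpow_nonneg (abs_nonneg _) _) h2 (by positivity)
    have h2 : |f y - f z| ≤ (E f * b⁻¹) ^ (1/p) := by
      have hl := energy_lower hp hE f hzy
      have h2' : |f y - f z| ^ p ≤ E f * b⁻¹ := by
        rw [← div_eq_mul_inv]; exact (le_div_iff₀ hb).2 hl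
      calc |f y - f z| = (|f y - f z| ^ p) ^ (1/p) := by
            rw [← Real.rpow_mul (abs_nonneg _), mul_one_div, div_self hp0.ne', Real.rpow_one]
        _ ≤ (E f * b⁻¹) ^ (1/p) :=
            Real.rpow_le_rpow (Real.rpow_nonneg (abs_nonneg _) _) h2' (by positivity)
    have h3 : (1:ℝ) ≤ (E f) ^ (1/p) * B := by
      have hmul1 : (E f * a⁻¹) ^ (1/p) = (E f) ^ (1/p) * (a⁻¹) ^ (1/p) :=
        Real.mul_rpow hEf (inv_nonneg.2 ha.le)
      have hmul2 : (E f * b⁻¹) ^ (1/p) = (E f) ^ (1/p) * (b⁻¹) ^ (1/p) :=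
        Real.mul_rpow hEf (inv_nonneg.2 hb.le)
      calc (1:ℝ) = |f y - f x| := by rw [hfy, hfx]; norm_num
        _ ≤ |f y - f z| + |f z - f x| := abs_sub_le _ _ _
        _ ≤ (E f * b⁻¹) ^ (1/p) + (E f * a⁻¹) ^ (1/p) := add_le_add h2 h1
        _ = (E f) ^ (1/p) * B := by rw [hmul1, hmul2, hB]; ring
    have h4 : B⁻¹ ≤ (E f) ^ (1/p) := by
      rw [inv_eq_one_div, div_le_iff₀ hBpos]; exact h3
    calc (B⁻¹) ^ p ≤ ((E f) ^ (1/p)) ^ p :=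
          Real.rpow_le_rpow (inv_nonneg.2 hBpos.le) h4 hp0.le
      _ = E f := by rw [← Real.rpow_mul hEf, one_div_mul_cancel hp0.ne', Real.rpow_one]
  have hm : (B⁻¹) ^ p ≤ mE E x y := by
    refine le_csInf (mset_nonempty hxy) ?_
    rintro r ⟨f, ⟨h1, h2⟩, rfl⟩
    exact key f h1 h2
  have hT : (0:ℝ) < (B⁻¹) ^ p := Real.rpow_pos_of_pos (inv_pos.2 hBpos) _
  have hmpos : 0 < mE E x y := lt_of_lt_of_le hT hm
  have hminv : (mE E x y)⁻¹ ≤ ((B⁻¹) ^ p)⁻¹ := inv_anti₀ hT hm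
  calc (mE E x y)⁻¹ ^ (1/p) ≤ (((B⁻¹) ^ p)⁻¹) ^ (1/p) :=
        Real.rpow_le_rpow (inv_nonneg.2 hmpos.le) hminv (by positivity)
    _ = B := by
        rw [Real.inv_rpow hBpos.le, inv_inv, ← Real.rpow_mul hBpos.le, mul_one_div,
          div_self hp0.ne', Real.rpow_one]

private lemma pRes_ne' (hxy : x ≠ y) :
    pRes E x y = (ENNReal.ofReal (mE E x y))⁻¹ := by
  simp only [pRes, if_neg hxy]; rfl

private lemma pRes_rpow_eq (hp : 1 < p) (hxy : x ≠ y) (hm : 0 < mE E x y) :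
    pRes E x y ^ (1/p) = ENNReal.ofReal ((mE E x y)⁻¹ ^ (1/p)) := by
  rw [pRes_ne' hxy, ← ENNReal.ofReal_inv_of_pos hm,
    ENNReal.ofReal_rpow_of_pos (inv_pos.2 hm)]

private lemma pRes_ne_top_iff (hxy : x ≠ y) :
    pRes E x y ≠ ⊤ ↔ 0 < mE E x y := by
  rw [pRes_ne' hxy, Ne, ENNReal.inv_eq_top, ENNReal.ofReal_eq_zero, not_le]

end Aux

/-- For `x, y, z` with finite mutual resistances the triangle inequality
`R(x,y)^{1/p} ≤ R(x,z)^{1/p} + R(z,y)^{1/p}` holds.  Consequently, if `E` is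
nondegenerate then `(x,y) ↦ R(x,y)^{1/p}` is a (finite-valued) metric on `A`. -/
theorem pRes_rpow_triangle_and_metric {A : Type*} [Fintype A] [DecidableEq A]
    (hA : 2 ≤ Fintype.card A) (p : ℝ) (hp : 1 < p)
    (E : (A → ℝ) → ℝ) (hE : IsPEnergyT p E) :
    (∀ x y z : A, pRes E x y ≠ ⊤ → pRes E x z ≠ ⊤ → pRes E y z ≠ ⊤ →
        pRes E x y ^ (1 / p) ≤ pRes E x z ^ (1 / p) + pRes E z y ^ (1 / p)) ∧
    ((∀ f : A → ℝ, E f = 0 ↔ ∃ c : ℝ, ∀ a, f a = c) →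
      (∀ x y : A, pRes E x y ^ (1 / p) = 0 ↔ x = y) ∧
      (∀ x y : A, pRes E x y = pRes E y x) ∧
      (∀ x y : A, x ≠ y → pRes E x y ≠ ⊤) ∧
      (∀ x y z : A,
        pRes E x z ^ (1 / p) ≤ pRes E x y ^ (1 / p) + pRes E y z ^ (1 / p))) := by
  classical
  have hppos : (0:ℝ) < p := by linarith
  have h1p : (0:ℝ) < 1 / p := by positivity
  have tri : ∀ x y z : A, pRes E x y ≠ ⊤ → pRes E x z ≠ ⊤ → pRes E y z ≠ ⊤ →
      pRes E x y ^ (1 / p) ≤ pRes E x z ^ (1 / p) + pRes E z y ^ (1 / p) := by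
    intro x y z hxy hxz hyz
    by_cases h1 : x = y
    · subst h1
      rw [show pRes E x x = 0 from by simp [pRes], ENNReal.zero_rpow_of_pos h1p]
      exact zero_le
    by_cases h2 : x = z
    · subst h2
      rw [show pRes E x x = 0 from by simp [pRes], ENNReal.zero_rpow_of_pos h1p, zero_add]
    by_cases h3 : z = y
    · subst h3
      rw [show pRes E z z = 0 from by simp [pRes], ENNReal.zero_rpow_of_pos h1p, add_zero]
    · have hmxz : 0 < mE E x z := (pRes_ne_top_iff h2).1 hxz
      have hyz' : y ≠ z := fun h => h3 h.symm
      have hmyz : 0 < mE E y z := (pRes_ne_top_iff hyz').1 hyz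
      have hmzy : 0 < mE E z y := by rw [mE_symm hp hE z y]; exact hmyz
      have hmxy : 0 < mE E x y := (pRes_ne_top_iff h1).1 hxy
      rw [pRes_rpow_eq hp h1 hmxy, pRes_rpow_eq hp h2 hmxz, pRes_rpow_eq hp h3 hmzy,
        ← ENNReal.ofReal_add (Real.rpow_nonneg (inv_nonneg.2 hmxz.le) _)
          (Real.rpow_nonneg (inv_nonneg.2 hmzy.le) _)]
      exact ENNReal.ofReal_le_ofReal (real_triangle hp hE h1 h2 h3 hmxz hmzy)
  refine ⟨tri, fun hnd => ?_⟩
  have hfin : ∀ u v : A, pRes E u v ≠ ⊤ := by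
    intro u v
    by_cases h : u = v
    · simp [pRes, h]
    · exact (pRes_ne_top_iff h).2 (mE_pos hp hE hnd h)
  refine ⟨?_, ?_, fun x y h => hfin x y,
    fun x y z => tri x z y (hfin x z) (hfin x y) (hfin z y)⟩
  · intro x y
    constructor
    · intro h
      by_contra hne
      rw [pRes_rpow_eq hp hne (mE_pos hp hE hnd hne), ENNReal.ofReal_eq_zero] at h
      have hpos : 0 < (mE E x y)⁻¹ ^ (1/p) :=
        Real.rpow_pos_of_pos (inv_pos.2 (mE_pos hp hE hnd hne)) _
      linarith
    · rintro rfl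
      rw [show pRes E x x = 0 from by simp [pRes], ENNReal.zero_rpow_of_pos h1p]
  · intro x y
    by_cases h : x = y
    · rw [h]
    · rw [pRes_ne' h, pRes_ne' (Ne.symm h), mE_symm hp hE x y]
end

section
/- Let E be a p-energy on a finite set A. Then for every f : A → ℝ, E(|f|) ≤ 2^p E(f). -/
/-- Positive part estimate: `E(f⁺) ≤ E(f)`. -/
lemma pEnergy_posPart_le {A : Type*} [Fintype A]
    (p : ℝ) (E : (A → ℝ) → ℝ) (hE : IsPEnergyT p E)
    (f : A → ℝ) : E (fun x => max (f x) 0) ≤ E f := by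
  obtain ⟨hnn, hconv, hhom, hconst, hmarkov⟩ := hE
  set t : ℝ := 1 + ∑ x, |f x| with ht_def
  have hsum : (0:ℝ) ≤ ∑ x, |f x| := Finset.sum_nonneg fun x _ => abs_nonneg _
  have ht : 0 < t := by positivity
  have hfx : ∀ x, |f x| < t := by
    intro x
    have : |f x| ≤ ∑ y, |f y| :=
      Finset.single_le_sum (fun y _ => abs_nonneg (f y)) (Finset.mem_univ x)
    linarith
  set g : A → ℝ := fun x => (1/t) * f x with hg_def
  have key : (fun x => t * min (max (g x) 0) 1) = fun x => max (f x) 0 := by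
    funext x
    have hfx' := hfx x
    rcases le_or_gt (f x) 0 with h | h
    · have hg0 : g x ≤ 0 := by
        have : (1/t) * f x ≤ 0 := mul_nonpos_of_nonneg_of_nonpos (by positivity) h
        simpa [hg_def] using this
      simp [max_eq_right hg0, max_eq_right h, min_eq_left (by norm_num : (0:ℝ) ≤ 1)]
    · have hg0 : 0 ≤ g x := by
        have : 0 ≤ (1/t) * f x := mul_nonneg (by positivity) h.le
        simpa [hg_def] using this
      have hg1 : g x ≤ 1 := by
        show 1/t * f x ≤ 1
        rw [div_mul_eq_mul_div, one_mul, div_le_one ht]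
        calc f x ≤ |f x| := le_abs_self _
          _ ≤ t := (hfx x).le
      rw [max_eq_left hg0, min_eq_left hg1, max_eq_left h.le, hg_def]
      field_simp
  have h1 : E (fun x => max (f x) 0) = |t| ^ p * E (fun x => min (max (g x) 0) 1) := by
    rw [← key, hhom]
  have h2 : E g = |1/t| ^ p * E f := hhom f (1/t)
  have habs_t : |t| = t := abs_of_pos ht
  have habs : |1/t| = 1/t := abs_of_pos (by positivity)
  have hpow : t ^ p * (1/t) ^ p = 1 := by
    rw [← Real.mul_rpow ht.le (by positivity)]
    rw [mul_one_div, div_self (ne_of_gt ht), Real.one_rpow]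
  calc E (fun x => max (f x) 0)
      = |t| ^ p * E (fun x => min (max (g x) 0) 1) := h1
    _ ≤ |t| ^ p * E g := by
        apply mul_le_mul_of_nonneg_left (hmarkov g)
        positivity
    _ = t ^ p * ((1/t) ^ p * E f) := by rw [h2, habs_t, habs]
    _ = E f := by rw [← mul_assoc, hpow, one_mul]

/-- For any `p`-energy `E` on a finite set and any `f`, `E(|f|) ≤ 2^p E(f)`. -/
theorem pEnergy_abs_le {A : Type*} [Fintype A]
    (p : ℝ) (hp : 1 < p) (E : (A → ℝ) → ℝ) (hE : IsPEnergyT p E)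
    (f : A → ℝ) :
    E (fun x => |f x|) ≤ (2 : ℝ) ^ p * E f := by
  obtain ⟨hnn, hconv, hhom, hconst, hmarkov⟩ := hE
  have hE' : IsPEnergyT p E := ⟨hnn, hconv, hhom, hconst, hmarkov⟩
  have hpos := pEnergy_posPart_le p E hE' f
  have hEneg : E (fun x => -f x) = E f := by
    have := hhom f (-1)
    simpa [Real.one_rpow] using this
  have hneg : E (fun x => max (-f x) 0) ≤ E f := by
    calc E (fun x => max (-f x) 0) ≤ E (fun x => -f x) :=
          pEnergy_posPart_le p E hE' (fun x => -f x)
      _ = E f := hEneg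
  have hhalf : E (fun x => (1/2) * max (f x) 0 + (1 - 1/2) * max (-f x) 0) ≤
      (1/2) * E (fun x => max (f x) 0) + (1 - 1/2) * E (fun x => max (-f x) 0) :=
    hconv _ _ (1/2) (by norm_num) (by norm_num)
  have habs_eq : (fun x => |f x|) =
      fun x => 2 * ((1/2) * max (f x) 0 + (1 - 1/2) * max (-f x) 0) := by
    funext x
    rcases le_or_gt 0 (f x) with h | h
    · rw [abs_of_nonneg h, max_eq_left h, max_eq_right (by linarith)]
      ring
    · rw [abs_of_neg h, max_eq_right h.le, max_eq_left (by linarith)]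
      ring
  rw [habs_eq, hhom]
  have h2p : (0:ℝ) ≤ |(2:ℝ)| ^ p := by positivity
  have : |(2:ℝ)| = 2 := by norm_num
  rw [this]
  apply mul_le_mul_of_nonneg_left _ (by positivity : (0:ℝ) ≤ (2:ℝ) ^ p)
  calc E (fun x => (1/2) * max (f x) 0 + (1 - 1/2) * max (-f x) 0)
      ≤ (1/2) * E (fun x => max (f x) 0) + (1 - 1/2) * E (fun x => max (-f x) 0) := hhalf
    _ ≤ (1/2) * E f + (1 - 1/2) * E f := by
        gcongr <;> norm_num
    _ = E f := by ring
end

section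
/- There exists a constant C > 0 depending only on #A and p so that for any p-energy E on a finite set A, the standard form Ē(f) = Σ_{x≠y∈A} R(x,y)⁻¹ |f(x)-f(y)|^p (where R is the resistance of E) satisfies C⁻¹ Ē(f) ≤ E(f) ≤ C Ē(f) for all f : A → ℝ. -/
open scoped ENNReal

/-- The standard form `Ē(f) = Σ_{x≠y} R(x,y)⁻¹ |f(x)-f(y)|^p`, with the
convention `∞⁻¹ = 0`.  (The diagonal terms vanish since `R(x,x)⁻¹` is `∞`,
whose real part is `0`, and `|f x - f x| = 0`.) -/
noncomputable def stdForm {A : Type*} [Fintype A] [DecidableEq A]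
    (p : ℝ) (E : (A → ℝ) → ℝ) (f : A → ℝ) : ℝ :=
  ∑ x : A, ∑ y : A, ((pRes E x y)⁻¹).toReal * |f x - f y| ^ p

open scoped NNReal
open Finset

namespace PEaux

/-- `p`-th root of the energy. -/
noncomputable def FE {A : Type*} (p : ℝ) (E : (A → ℝ) → ℝ) (f : A → ℝ) : ℝ :=
  E f ^ p⁻¹

/-- cost of connecting `x` to `y`. -/
noncomputable def pcost {A : Type*} (E : (A → ℝ) → ℝ) (x y : A) : ℝ :=
  sInf (E '' {f : A → ℝ | f x = 0 ∧ f y = 1})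

/-- off-diagonal cost. -/
noncomputable def pco {A : Type*} [DecidableEq A] (E : (A → ℝ) → ℝ) (x y : A) : ℝ :=
  if x = y then 0 else pcost E x y

variable {A : Type*} {p : ℝ} {E : (A → ℝ) → ℝ}

lemma en_zero (hpne : p ≠ 0) (hE : IsPEnergyT p E) : E (fun _ => (0:ℝ)) = 0 := by
  have h := hE.2.2.1 (fun _ => (0:ℝ)) 0
  have h2 : (fun x : A => (0:ℝ) * (0:ℝ)) = fun _ : A => (0:ℝ) := by funext x; ring
  rw [h2] at h
  rw [h, abs_zero, Real.zero_rpow hpne, zero_mul]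

lemma en_const (hpne : p ≠ 0) (hE : IsPEnergyT p E) (c : ℝ) : E (fun _ => c) = 0 := by
  have h := hE.2.2.2.1 (fun _ => (0:ℝ)) c
  have h2 : (fun x : A => (0:ℝ) + c) = fun _ : A => c := by funext x; ring
  rw [h2] at h
  rw [h, en_zero hpne hE]

lemma fe_nonneg (hE : IsPEnergyT p E) (f : A → ℝ) : 0 ≤ FE p E f :=
  Real.rpow_nonneg (hE.1 f) _

lemma en_eq_fe_rpow (hpne : p ≠ 0) (hE : IsPEnergyT p E) (f : A → ℝ) :
    E f = FE p E f ^ p :=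
  (Real.rpow_inv_rpow (hE.1 f) hpne).symm

lemma fe_le_of_en_le (hp0 : 0 < p) (hE : IsPEnergyT p E) {f g : A → ℝ} (h : E f ≤ E g) :
    FE p E f ≤ FE p E g :=
  Real.rpow_le_rpow (hE.1 f) h (by positivity)

lemma en_le_of_fe_le (hp0 : 0 < p) (hE : IsPEnergyT p E) {f : A → ℝ} {b : ℝ}
    (h : FE p E f ≤ b) : E f ≤ b ^ p := by
  rw [en_eq_fe_rpow hp0.ne' hE f]
  exact Real.rpow_le_rpow (fe_nonneg hE f) h hp0.le

lemma fe_smul (hpne : p ≠ 0) (hE : IsPEnergyT p E) (t : ℝ) (f : A → ℝ) :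
    FE p E (fun x => t * f x) = |t| * FE p E f := by
  unfold FE
  rw [hE.2.2.1 f t, Real.mul_rpow (by positivity) (hE.1 f),
    Real.rpow_rpow_inv (abs_nonneg t) hpne]

lemma fe_add_const (hE : IsPEnergyT p E) (f : A → ℝ) (c : ℝ) :
    FE p E (fun x => f x + c) = FE p E f := by
  unfold FE; rw [hE.2.2.2.1 f c]

lemma fe_cut (hp0 : 0 < p) (hE : IsPEnergyT p E) (f : A → ℝ) :
    FE p E (fun x => min (max (f x) 0) 1) ≤ FE p E f := by
  exact Real.rpow_le_rpow (hE.1 _) (hE.2.2.2.2 f) (by positivity)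

lemma fe_add (hp : 1 < p) (hE : IsPEnergyT p E) (f g : A → ℝ) :
    FE p E (fun x => f x + g x) ≤ FE p E f + FE p E g := by
  have hp0 : (0:ℝ) < p := lt_trans one_pos hp
  refine le_of_forall_pos_le_add fun ε hε => ?_
  set a := FE p E f with ha'
  set b := FE p E g with hb'
  have ha : 0 ≤ a := fe_nonneg hE f
  have hb : 0 ≤ b := fe_nonneg hE g
  set α := a + ε/2 with hα'
  set β := b + ε/2 with hβ'
  have hα : 0 < α := by positivity
  have hβ : 0 < β := by positivity
  set S := α + β with hS'
  have hS : 0 < S := by positivity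
  set t := α / S with ht
  have ht0 : 0 < t := div_pos hα hS
  have ht1 : t < 1 := by rw [ht, div_lt_one hS]; rw [hS']; linarith
  have h1t : 0 < 1 - t := by linarith
  have h1teq : 1 - t = β / S := by rw [ht]; field_simp; rw [hS']; ring
  have key := hE.2.1 (fun x => t⁻¹ * f x) (fun x => (1-t)⁻¹ * g x) t ht0 ht1
  have e1 : (fun x => t * (t⁻¹ * f x) + (1-t) * ((1-t)⁻¹ * g x)) = fun x => f x + g x := by
    funext x
    rw [← mul_assoc, ← mul_assoc, mul_inv_cancel₀ ht0.ne', mul_inv_cancel₀ h1t.ne',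
      one_mul, one_mul]
  rw [e1, hE.2.2.1 f t⁻¹, hE.2.2.1 g (1-t)⁻¹] at key
  have hEf : E f ≤ α ^ p := by
    rw [en_eq_fe_rpow hp0.ne' hE f, ← ha']
    exact Real.rpow_le_rpow ha (by rw [hα']; linarith) hp0.le
  have hEg : E g ≤ β ^ p := by
    rw [en_eq_fe_rpow hp0.ne' hE g, ← hb']
    exact Real.rpow_le_rpow hb (by rw [hβ']; linarith) hp0.le
  have comp : ∀ γ : ℝ, 0 < γ → (γ/S) * (|(γ/S)⁻¹| ^ p * γ ^ p) = γ * S ^ (p-1) := by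
    intro γ hγ
    rw [abs_of_pos (by positivity), inv_div, Real.div_rpow hS.le hγ.le,
      div_mul_cancel₀ _ (Real.rpow_pos_of_pos hγ p).ne', Real.rpow_sub hS,
      Real.rpow_one]
    field_simp
  have hterm1 : t * (|t⁻¹| ^ p * E f) ≤ α * S ^ (p-1) := by
    rw [← comp α hα, ← ht]
    have h1 : (0:ℝ) ≤ |t⁻¹| ^ p := by positivity
    exact mul_le_mul_of_nonneg_left (mul_le_mul_of_nonneg_left hEf h1) ht0.le
  have hterm2 : (1-t) * (|(1-t)⁻¹| ^ p * E g) ≤ β * S ^ (p-1) := by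
    rw [← comp β hβ, ← h1teq]
    have h1 : (0:ℝ) ≤ |(1-t)⁻¹| ^ p := by positivity
    exact mul_le_mul_of_nonneg_left (mul_le_mul_of_nonneg_left hEg h1) h1t.le
  have hsum : E (fun x => f x + g x) ≤ S ^ p := by
    have hSp : α * S ^ (p-1) + β * S ^ (p-1) = S ^ p := by
      have hpeq : p = 1 + (p-1) := by ring
      have : S ^ p = S * S ^ (p - 1) := by
        calc S ^ p = S ^ (1 + (p-1)) := by rw [← hpeq]
          _ = S ^ (1:ℝ) * S ^ (p-1) := Real.rpow_add hS 1 (p-1)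
          _ = S * S ^ (p-1) := by rw [Real.rpow_one]
      rw [this, hS']; ring
    calc E (fun x => f x + g x) ≤ t * (|t⁻¹| ^ p * E f) + (1-t) * (|(1-t)⁻¹| ^ p * E g) := key
      _ ≤ α * S ^ (p-1) + β * S ^ (p-1) := add_le_add hterm1 hterm2
      _ = S ^ p := hSp
  have : FE p E (fun x => f x + g x) ≤ S := by
    have := Real.rpow_le_rpow (hE.1 _) hsum (by positivity : (0:ℝ) ≤ p⁻¹)
    rwa [Real.rpow_rpow_inv hS.le hp0.ne'] at this
  calc FE p E (fun x => f x + g x) ≤ S := this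
    _ = a + b + ε := by rw [hS', hα', hβ']; ring


lemma fe_sum (hp : 1 < p) (hE : IsPEnergyT p E) {ι : Type*} (s : Finset ι)
    (h : ι → A → ℝ) :
    FE p E (fun x => ∑ i ∈ s, h i x) ≤ ∑ i ∈ s, FE p E (h i) := by
  have hp0 : (0:ℝ) < p := lt_trans one_pos hp
  induction s using Finset.cons_induction with
  | empty =>
      simp only [Finset.sum_empty]
      unfold FE
      rw [en_zero hp0.ne' hE, Real.zero_rpow (by positivity : p⁻¹ ≠ 0)]
  | cons j s hj ih =>
      simp only [Finset.sum_cons]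
      calc FE p E (fun x => h j x + ∑ i ∈ s, h i x)
          ≤ FE p E (h j) + FE p E (fun x => ∑ i ∈ s, h i x) := fe_add hp hE _ _
        _ ≤ FE p E (h j) + ∑ i ∈ s, FE p E (h i) := by
            exact add_le_add (le_refl _) ih

lemma pcost_bdd (hE : IsPEnergyT p E) (x y : A) :
    ∀ r ∈ E '' {f : A → ℝ | f x = 0 ∧ f y = 1}, 0 ≤ r := by
  rintro r ⟨g, -, rfl⟩; exact hE.1 g

lemma pcost_nonneg (hE : IsPEnergyT p E) (x y : A) : 0 ≤ pcost E x y :=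
  Real.sInf_nonneg (pcost_bdd hE x y)

lemma pco_nonneg [DecidableEq A] (hE : IsPEnergyT p E) (x y : A) : 0 ≤ pco E x y := by
  unfold pco; split
  · exact le_refl 0
  · exact pcost_nonneg hE x y

lemma pcost_le (hE : IsPEnergyT p E) {x y : A} {g : A → ℝ}
    (hx : g x = 0) (hy : g y = 1) : pcost E x y ≤ E g :=
  csInf_le ⟨0, pcost_bdd hE x y⟩ ⟨g, ⟨hx, hy⟩, rfl⟩

lemma en_one_sub (hE : IsPEnergyT p E) (g : A → ℝ) :
    E (fun z => 1 - g z) = E g := by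
  have h1 : (fun z : A => 1 - g z) = fun z => (-1) * g z + 1 := by funext z; ring
  rw [h1, hE.2.2.2.1 (fun z => (-1) * g z) 1, hE.2.2.1 g (-1)]
  simp [Real.one_rpow]

lemma pcost_symm (hE : IsPEnergyT p E) {x y : A} (hxy : x ≠ y) :
    pcost E x y = pcost E y x := by
  classical
  have key : ∀ a b : A, a ≠ b → pcost E a b ≤ pcost E b a := by
    intro a b hab
    apply le_csInf
    · exact ⟨E (fun z => if z = a then (1:ℝ) else 0),
        ⟨fun z => if z = a then (1:ℝ) else 0, ⟨by simp [Ne.symm hab], by simp⟩, rfl⟩⟩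
    · rintro r ⟨g, ⟨hgb, hga⟩, rfl⟩
      have := pcost_le hE (x := a) (y := b) (g := fun z => 1 - g z)
        (by simp [hga]) (by simp [hgb])
      rwa [en_one_sub hE g] at this
  exact le_antisymm (key x y hxy) (key y x hxy.symm)

lemma pcost_exists (hE : IsPEnergyT p E) {x y : A} (hxy : x ≠ y) {ε : ℝ} (hε : 0 < ε) :
    ∃ g : A → ℝ, g x = 0 ∧ g y = 1 ∧ (∀ z, 0 ≤ g z) ∧ (∀ z, g z ≤ 1) ∧
      E g < pcost E x y + ε := by
  classical
  have hne : (E '' {f : A → ℝ | f x = 0 ∧ f y = 1}).Nonempty := by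
    refine ⟨E (fun z => if z = y then (1:ℝ) else 0),
      ⟨fun z => if z = y then (1:ℝ) else 0, ⟨by simp [hxy], by simp⟩, rfl⟩⟩
  obtain ⟨r, ⟨g₀, ⟨h1, h2⟩, rfl⟩, hlt⟩ :=
    exists_lt_of_csInf_lt hne (lt_add_of_pos_right (pcost E x y) hε)
  refine ⟨fun z => min (max (g₀ z) 0) 1, by simp [h1], by simp [h2],
    fun z => le_min (le_max_right _ _) zero_le_one, fun z => min_le_right _ _,
    lt_of_le_of_lt (hE.2.2.2.2 g₀) hlt⟩


lemma rpow_add_le {q : ℝ} (hq0 : 0 ≤ q) (hq1 : q ≤ 1) {x y : ℝ} (hx : 0 ≤ x) (hy : 0 ≤ y) :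
    (x + y) ^ q ≤ x ^ q + y ^ q := by
  have h := NNReal.rpow_add_le_add_rpow x.toNNReal y.toNNReal hq0 hq1
  have hxy : ((x.toNNReal + y.toNNReal : ℝ≥0) : ℝ) = x + y := by
    simp [Real.coe_toNNReal x hx, Real.coe_toNNReal y hy]
  calc (x + y) ^ q = ((x.toNNReal + y.toNNReal : ℝ≥0) : ℝ) ^ q := by rw [hxy]
    _ = (((x.toNNReal + y.toNNReal : ℝ≥0) ^ q : ℝ≥0) : ℝ) := by
        rw [NNReal.coe_rpow]
    _ ≤ ((x.toNNReal ^ q + y.toNNReal ^ q : ℝ≥0) : ℝ) := by exact_mod_cast h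
    _ = x ^ q + y ^ q := by
        push_cast [NNReal.coe_rpow]
        rw [Real.coe_toNNReal x hx, Real.coe_toNNReal y hy]

lemma rpow_sum_le_sum_rpow {ι : Type*} (s : Finset ι) (a : ι → ℝ)
    (ha : ∀ i ∈ s, 0 ≤ a i) {q : ℝ} (hq0 : 0 < q) (hq1 : q ≤ 1) :
    (∑ i ∈ s, a i) ^ q ≤ ∑ i ∈ s, a i ^ q := by
  induction s using Finset.cons_induction with
  | empty => simp [Real.zero_rpow hq0.ne']
  | cons j s hj ih =>
      rw [Finset.sum_cons, Finset.sum_cons]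
      have h1 : 0 ≤ a j := ha j (Finset.mem_cons_self _ _)
      have h2 : 0 ≤ ∑ i ∈ s, a i :=
        Finset.sum_nonneg fun i hi => ha i (Finset.mem_cons_of_mem hi)
      refine (rpow_add_le hq0.le hq1 h1 h2).trans ?_
      exact add_le_add (le_refl _) (ih fun i hi => ha i (Finset.mem_cons_of_mem hi))

lemma sum_rpow_le_card_mul {ι : Type*} (s : Finset ι) (a : ι → ℝ)
    (ha : ∀ i ∈ s, 0 ≤ a i) {p : ℝ} (hp : 1 ≤ p) :
    (∑ i ∈ s, a i) ^ p ≤ (s.card : ℝ) ^ (p - 1) * ∑ i ∈ s, a i ^ p := by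
  have hpne : p ≠ 0 := by intro h; rw [h] at hp; norm_num at hp
  rcases s.eq_empty_or_nonempty with rfl | hs
  · simp [Real.zero_rpow hpne]
  · have hN : (0:ℝ) < s.card := by exact_mod_cast hs.card_pos
    have hw : ∑ _i ∈ s, (s.card : ℝ)⁻¹ = 1 := by
      rw [Finset.sum_const, nsmul_eq_mul, mul_inv_cancel₀ hN.ne']
    have h := Real.rpow_arith_mean_le_arith_mean_rpow s (fun _ => (s.card:ℝ)⁻¹) a
      (fun i _ => by positivity) hw ha hp
    rw [← Finset.mul_sum, Real.mul_rpow (by positivity) (Finset.sum_nonneg ha),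
      ← Finset.mul_sum] at h
    have h2 : (∑ i ∈ s, a i) ^ p ≤ (s.card:ℝ) ^ p * ((s.card:ℝ)⁻¹ * ∑ i ∈ s, a i ^ p) := by
      calc (∑ i ∈ s, a i) ^ p
          = (s.card:ℝ) ^ p * (((s.card:ℝ)⁻¹) ^ p * (∑ i ∈ s, a i) ^ p) := by
            rw [Real.inv_rpow hN.le, ← mul_assoc,
              mul_inv_cancel₀ (Real.rpow_pos_of_pos hN p).ne', one_mul]
        _ ≤ (s.card:ℝ) ^ p * ((s.card:ℝ)⁻¹ * ∑ i ∈ s, a i ^ p) :=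
            mul_le_mul_of_nonneg_left h (Real.rpow_nonneg hN.le p)
    calc (∑ i ∈ s, a i) ^ p ≤ (s.card:ℝ) ^ p * ((s.card:ℝ)⁻¹ * ∑ i ∈ s, a i ^ p) := h2
      _ = (s.card : ℝ) ^ (p - 1) * ∑ i ∈ s, a i ^ p := by
          rw [Real.rpow_sub hN, Real.rpow_one]
          field_simp


section FinA

variable [Fintype A] [DecidableEq A]

lemma coef_eq (hE : IsPEnergyT p E) (x y : A) :
    ((pRes E x y)⁻¹).toReal = pco E x y := by
  unfold pRes pco
  by_cases h : x = y
  · simp [h]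
  · rw [if_neg h, if_neg h, inv_inv]
    exact ENNReal.toReal_ofReal (pcost_nonneg hE x y)

lemma stdForm_eq (hE : IsPEnergyT p E) (f : A → ℝ) :
    stdForm p E f = ∑ x : A, ∑ y : A, pco E x y * |f x - f y| ^ p := by
  unfold stdForm
  exact Finset.sum_congr rfl fun x _ => Finset.sum_congr rfl fun y _ => by
    rw [coef_eq hE]

lemma indicator_bound (hp : 1 < p) (hE : IsPEnergyT p E) (T : Finset A)
    (hT : T.Nonempty) (hT' : Tᶜ.Nonempty) :
    E (fun z => if z ∈ T then (1:ℝ) else 0) ≤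
      (Fintype.card A : ℝ) ^ (2*p - 2) * ∑ x ∈ Tᶜ, ∑ y ∈ T, pcost E x y := by
  have hp0 : (0:ℝ) < p := lt_trans one_pos hp
  set n := Fintype.card A with hn
  have hnA : Nonempty A := ⟨hT.choose⟩
  have hn0 : (0:ℝ) < n := by
    have := Fintype.card_pos_iff.mpr hnA
    rw [hn]; exact_mod_cast this
  refine le_of_forall_pos_le_add fun ε hε => ?_
  set m := (n:ℝ) ^ (2*p - 2) with hm
  have hmpos : 0 < m := Real.rpow_pos_of_pos hn0 _
  set δ := ε / (m * ((n:ℝ) * (n:ℝ)) + 1) with hδ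
  have hδpos : 0 < δ := by positivity
  have hch : ∀ x y : A, ∃ g : A → ℝ, (∀ z, 0 ≤ g z) ∧ (∀ z, g z ≤ 1) ∧
      (x ≠ y → g x = 0 ∧ g y = 1 ∧ E g < pcost E x y + δ) := by
    intro x y
    by_cases h : x = y
    · exact ⟨fun _ => 0, fun _ => le_refl 0, fun _ => zero_le_one,
        fun hc => absurd h hc⟩
    · obtain ⟨g, h1, h2, h3, h4, h5⟩ := pcost_exists hE h hδpos
      exact ⟨g, h3, h4, fun _ => ⟨h1, h2, h5⟩⟩
  choose G hG0 hG1 hG using hch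
  set S := Tᶜ with hSdef
  have hST : ∀ x ∈ S, ∀ y ∈ T, x ≠ y := by
    intro x hx y hy h
    exact (Finset.mem_compl.mp hx) (h ▸ hy)
  set v : A → A → ℝ := fun y z =>
    min (max ((∑ x ∈ S, G x y z) - ((S.card : ℝ) - 1)) 0) 1 with hv
  have hvnonneg : ∀ y z, 0 ≤ v y z := fun y z =>
    le_min (le_max_right _ _) zero_le_one
  have hvy : ∀ y ∈ T, v y y = 1 := by
    intro y hy
    have hsum : ∑ x ∈ S, G x y y = (S.card : ℝ) := by
      rw [Finset.sum_congr rfl (fun x hx => (hG x y (hST x hx y hy)).2.1),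
        Finset.sum_const, nsmul_eq_mul, mul_one]
    show min (max ((∑ x ∈ S, G x y y) - ((S.card : ℝ) - 1)) 0) 1 = 1
    rw [hsum]
    norm_num
  have hvx : ∀ y ∈ T, ∀ x' ∈ S, v y x' = 0 := by
    intro y hy x' hx'
    have hcard1 : 1 ≤ S.card := Finset.card_pos.mpr ⟨x', hx'⟩
    have hsum : ∑ x ∈ S, G x y x' ≤ (S.card : ℝ) - 1 := by
      rw [← Finset.add_sum_erase S _ hx', (hG x' y (hST x' hx' y hy)).1, zero_add]
      calc ∑ x ∈ S.erase x', G x y x' ≤ ∑ _x ∈ S.erase x', (1:ℝ) :=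
            Finset.sum_le_sum fun x _ => hG1 x y x'
        _ = ((S.erase x').card : ℝ) := by rw [Finset.sum_const, nsmul_eq_mul, mul_one]
        _ = (S.card : ℝ) - 1 := by
            rw [Finset.card_erase_of_mem hx', Nat.cast_sub hcard1, Nat.cast_one]
    show min (max ((∑ x ∈ S, G x y x') - ((S.card : ℝ) - 1)) 0) 1 = 0
    rw [max_eq_right (by linarith), min_eq_left zero_le_one]
  have hu : (fun z => min (max (∑ y ∈ T, v y z) 0) 1)
      = fun z => if z ∈ T then (1:ℝ) else 0 := by
    funext z
    by_cases hz : z ∈ T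
    · rw [if_pos hz]
      have h1 : (1:ℝ) ≤ ∑ y ∈ T, v y z := by
        have h := Finset.single_le_sum (f := fun y => v y z)
          (fun y _ => hvnonneg y z) hz
        simpa [hvy z hz] using h
      rw [max_eq_left (le_trans zero_le_one h1), min_eq_right h1]
    · rw [if_neg hz]
      have hzS : z ∈ S := Finset.mem_compl.mpr hz
      rw [Finset.sum_eq_zero fun y hy => hvx y hy z hzS]
      norm_num
  have hEv : ∀ y ∈ T, E (v y) ≤ (n:ℝ) ^ (p-1) * ∑ x ∈ S, E (G x y) := by
    intro y hy
    have hfe : FE p E (v y) ≤ ∑ x ∈ S, FE p E (G x y) := by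
      have hcut := fe_cut hp0 hE
        (fun z => (∑ x ∈ S, G x y z) - ((S.card:ℝ) - 1))
      have hconst : FE p E (fun z => (∑ x ∈ S, G x y z) - ((S.card:ℝ) - 1))
          = FE p E (fun z => ∑ x ∈ S, G x y z) := by
        have heq : (fun z => (∑ x ∈ S, G x y z) - ((S.card:ℝ) - 1))
            = fun z => (∑ x ∈ S, G x y z) + (-((S.card:ℝ) - 1)) := by
          funext z; ring
        rw [heq, fe_add_const hE]
      calc FE p E (v y)
          ≤ FE p E (fun z => (∑ x ∈ S, G x y z) - ((S.card:ℝ) - 1)) := hcut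
        _ = FE p E (fun z => ∑ x ∈ S, G x y z) := hconst
        _ ≤ ∑ x ∈ S, FE p E (G x y) := fe_sum hp hE S (fun x => G x y)
    refine (en_le_of_fe_le hp0 hE hfe).trans ?_
    calc (∑ x ∈ S, FE p E (G x y)) ^ p
        ≤ (S.card:ℝ) ^ (p-1) * ∑ x ∈ S, (FE p E (G x y)) ^ p :=
          sum_rpow_le_card_mul S _ (fun x _ => fe_nonneg hE _) hp.le
      _ ≤ (n:ℝ) ^ (p-1) * ∑ x ∈ S, E (G x y) := by
          have h1 : ((S.card:ℝ)) ^ (p-1) ≤ (n:ℝ) ^ (p-1) :=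
            Real.rpow_le_rpow (Nat.cast_nonneg _)
              (by exact_mod_cast Finset.card_le_univ S) (by linarith)
          have h2 : ∑ x ∈ S, (FE p E (G x y)) ^ p = ∑ x ∈ S, E (G x y) :=
            Finset.sum_congr rfl fun x _ => (en_eq_fe_rpow hp0.ne' hE _).symm
          rw [h2]
          exact mul_le_mul_of_nonneg_right h1
            (Finset.sum_nonneg fun x _ => hE.1 _)
  have hmain : E (fun z => if z ∈ T then (1:ℝ) else 0)
      ≤ (n:ℝ) ^ (p-1) * ∑ y ∈ T, E (v y) := by
    rw [← hu]
    have hfe : FE p E (fun z => min (max (∑ y ∈ T, v y z) 0) 1)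
        ≤ ∑ y ∈ T, FE p E (v y) :=
      (fe_cut hp0 hE (fun z => ∑ y ∈ T, v y z)).trans (fe_sum hp hE T v)
    refine (en_le_of_fe_le hp0 hE hfe).trans ?_
    calc (∑ y ∈ T, FE p E (v y)) ^ p
        ≤ (T.card:ℝ) ^ (p-1) * ∑ y ∈ T, (FE p E (v y)) ^ p :=
          sum_rpow_le_card_mul T _ (fun y _ => fe_nonneg hE _) hp.le
      _ ≤ (n:ℝ) ^ (p-1) * ∑ y ∈ T, E (v y) := by
          have h1 : ((T.card:ℝ)) ^ (p-1) ≤ (n:ℝ) ^ (p-1) :=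
            Real.rpow_le_rpow (Nat.cast_nonneg _)
              (by exact_mod_cast Finset.card_le_univ T) (by linarith)
          have h2 : ∑ y ∈ T, (FE p E (v y)) ^ p = ∑ y ∈ T, E (v y) :=
            Finset.sum_congr rfl fun y _ => (en_eq_fe_rpow hp0.ne' hE _).symm
          rw [h2]
          exact mul_le_mul_of_nonneg_right h1
            (Finset.sum_nonneg fun y _ => hE.1 _)
  have hnn : (n:ℝ) ^ (p-1) * (n:ℝ) ^ (p-1) = m := by
    rw [hm, ← Real.rpow_add hn0]
    norm_num
    ring_nf
  have hstep2 : ∑ y ∈ T, E (v y)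
      ≤ (n:ℝ) ^ (p-1) * ∑ y ∈ T, ∑ x ∈ S, E (G x y) := by
    rw [Finset.mul_sum]
    exact Finset.sum_le_sum fun y hy => hEv y hy
  have hG_le : ∀ y ∈ T, ∀ x ∈ S, E (G x y) ≤ pcost E x y + δ := by
    intro y hy x hx
    exact le_of_lt (hG x y (hST x hx y hy)).2.2
  have hcount : ∑ y ∈ T, ∑ x ∈ S, E (G x y)
      ≤ (∑ x ∈ S, ∑ y ∈ T, pcost E x y) + (n:ℝ) * (n:ℝ) * δ := by
    calc ∑ y ∈ T, ∑ x ∈ S, E (G x y)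
        ≤ ∑ y ∈ T, ∑ x ∈ S, (pcost E x y + δ) :=
          Finset.sum_le_sum fun y hy => Finset.sum_le_sum fun x hx => hG_le y hy x hx
      _ = (∑ x ∈ S, ∑ y ∈ T, pcost E x y) + (T.card : ℝ) * ((S.card : ℝ) * δ) := by
          rw [Finset.sum_comm]
          simp [Finset.sum_add_distrib, Finset.mul_sum, mul_comm]
          ring
      _ ≤ (∑ x ∈ S, ∑ y ∈ T, pcost E x y) + (n:ℝ) * (n:ℝ) * δ := by
          have h1 : (T.card : ℝ) ≤ (n:ℝ) := by exact_mod_cast Finset.card_le_univ T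
          have h2 : (S.card : ℝ) ≤ (n:ℝ) := by exact_mod_cast Finset.card_le_univ S
          have h3 : (0:ℝ) ≤ (T.card : ℝ) := Nat.cast_nonneg _
          have h4 : (0:ℝ) ≤ (S.card : ℝ) := Nat.cast_nonneg _
          have h5 : (T.card : ℝ) * ((S.card:ℝ) * δ) ≤ (n:ℝ) * ((n:ℝ) * δ) := by
            have hd := hδpos.le
            gcongr
          nlinarith [h5]
  have hfinal : m * (n:ℝ) * (n:ℝ) * δ ≤ ε := by
    rw [hδ]
    have hD : (0:ℝ) < m * ((n:ℝ) * (n:ℝ)) + 1 := by positivity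
    have ha : m * (n:ℝ) * (n:ℝ) ≤ m * ((n:ℝ) * (n:ℝ)) + 1 := by nlinarith [hmpos.le, hn0.le]
    calc m * (n:ℝ) * (n:ℝ) * (ε / (m * ((n:ℝ) * (n:ℝ)) + 1))
        ≤ (m * ((n:ℝ) * (n:ℝ)) + 1) * (ε / (m * ((n:ℝ) * (n:ℝ)) + 1)) :=
          mul_le_mul_of_nonneg_right ha (by positivity)
      _ = ε := by field_simp
  calc E (fun z => if z ∈ T then (1:ℝ) else 0)
      ≤ (n:ℝ) ^ (p-1) * ∑ y ∈ T, E (v y) := hmain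
    _ ≤ (n:ℝ) ^ (p-1) * ((n:ℝ) ^ (p-1) * ∑ y ∈ T, ∑ x ∈ S, E (G x y)) := by
        exact mul_le_mul_of_nonneg_left hstep2 (Real.rpow_nonneg hn0.le _)
    _ = m * ∑ y ∈ T, ∑ x ∈ S, E (G x y) := by rw [← mul_assoc, hnn]
    _ ≤ m * ((∑ x ∈ S, ∑ y ∈ T, pcost E x y) + (n:ℝ) * (n:ℝ) * δ) :=
        mul_le_mul_of_nonneg_left hcount hmpos.le
    _ = m * (∑ x ∈ S, ∑ y ∈ T, pcost E x y) + m * (n:ℝ) * (n:ℝ) * δ := by ring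
    _ ≤ m * (∑ x ∈ S, ∑ y ∈ T, pcost E x y) + ε := by linarith [hfinal]


lemma star (hA : 2 ≤ Fintype.card A) (hp : 1 < p) (hE : IsPEnergyT p E) :
    ∀ (k : ℕ) (f : A → ℝ), (Finset.image f Finset.univ).card ≤ k →
      FE p E f ≤ ((Fintype.card A : ℝ) ^ (2*p - 2)) ^ p⁻¹ *
        ∑ x : A, ∑ y : A, (pco E x y) ^ p⁻¹ * |f x - f y| := by
  classical
  have hp0 : (0:ℝ) < p := lt_trans one_pos hp
  have hnA : Nonempty A := Fintype.card_pos_iff.mp (by omega)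
  set n := Fintype.card A with hn
  set K := ((n : ℝ) ^ (2*p - 2)) ^ p⁻¹ with hK
  have hK0 : 0 ≤ K := Real.rpow_nonneg (Real.rpow_nonneg (Nat.cast_nonneg _) _) _
  have hRHSnn : ∀ f : A → ℝ,
      0 ≤ ∑ x : A, ∑ y : A, (pco E x y) ^ p⁻¹ * |f x - f y| := by
    intro f
    refine Finset.sum_nonneg fun x _ => Finset.sum_nonneg fun y _ => ?_
    exact mul_nonneg (Real.rpow_nonneg (pco_nonneg hE x y) _) (abs_nonneg _)
  intro k
  induction k with
  | zero =>
      intro f hf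
      exfalso
      have : (Finset.image f Finset.univ).Nonempty :=
        Finset.univ_nonempty.image f
      have := Finset.card_pos.mpr this
      omega
  | succ k ih =>
      intro f hf
      by_cases hconst : ∀ x y : A, f x = f y
      · have hE0 : E f = 0 := by
          obtain ⟨x₀⟩ := hnA
          have : f = fun _ => f x₀ := funext fun z => hconst z x₀
          rw [this, en_const hp0.ne' hE]
        have : FE p E f = 0 := by
          unfold FE; rw [hE0, Real.zero_rpow (by positivity : p⁻¹ ≠ 0)]
        rw [this]
        exact mul_nonneg hK0 (hRHSnn f)
      · push_neg at hconst
        obtain ⟨x₀, y₀, hne⟩ := hconst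
        set V := Finset.image f Finset.univ with hV
        have hVmem : ∀ z, f z ∈ V := fun z =>
          Finset.mem_image_of_mem f (Finset.mem_univ z)
        have hVne : V.Nonempty := ⟨f x₀, hVmem x₀⟩
        have hV1 : 1 < V.card := Finset.one_lt_card.mpr ⟨f x₀, hVmem x₀, f y₀, hVmem y₀, hne⟩
        set m := V.min' hVne with hm
        set V' := V.erase m with hV'
        have hV'ne : V'.Nonempty := by
          rw [← Finset.card_pos, hV', Finset.card_erase_of_mem (V.min'_mem hVne)]
          omega
        set M := V'.min' hV'ne with hM
        have hMV' : M ∈ V' := V'.min'_mem hV'ne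
        have hMm : m < M := by
          have h1 : m ≤ M := V.min'_le M (Finset.mem_of_mem_erase hMV')
          have h2 : M ≠ m := Finset.ne_of_mem_erase hMV'
          exact lt_of_le_of_ne h1 (Ne.symm h2)
        have hfm : ∀ z, m ≤ f z := fun z => V.min'_le (f z) (hVmem z)
        have hfM : ∀ z, f z ≠ m → M ≤ f z := fun z hz =>
          V'.min'_le (f z) (Finset.mem_erase.mpr ⟨hz, hVmem z⟩)
        set T := Finset.univ.filter (fun z => M ≤ f z) with hT
        have hTmem : ∀ z, z ∈ T ↔ M ≤ f z := fun z => by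
          rw [hT, Finset.mem_filter]; simp
        obtain ⟨zM, -, hzM⟩ := Finset.mem_image.mp (show M ∈ Finset.image f Finset.univ from Finset.mem_of_mem_erase hMV')
        have hTne : T.Nonempty := ⟨zM, (hTmem zM).mpr (le_of_eq hzM.symm)⟩
        obtain ⟨zm, -, hzm⟩ := Finset.mem_image.mp (show m ∈ Finset.image f Finset.univ from V.min'_mem hVne)
        have hTcne : Tᶜ.Nonempty := by
          refine ⟨zm, Finset.mem_compl.mpr fun hc => ?_⟩
          have := (hTmem zm).mp hc
          rw [hzm] at this
          linarith
        have hnotT : ∀ z, z ∉ T → f z = m := by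
          intro z hz
          by_contra hne2
          exact hz ((hTmem z).mpr (hfM z hne2))
        set δ := M - m with hδ
        have hδ0 : 0 < δ := by rw [hδ]; linarith
        set χ : A → ℝ := fun z => if z ∈ T then (1:ℝ) else 0 with hχ
        set g : A → ℝ := fun z => max (f z - M) 0 with hg
        have hgT : ∀ z, z ∈ T → g z = f z - M := by
          intro z hz
          show max (f z - M) 0 = f z - M
          exact max_eq_left (by have := (hTmem z).mp hz; linarith)
        have hgTc : ∀ z, z ∉ T → g z = 0 := by
          intro z hz
          show max (f z - M) 0 = 0
          have := hnotT z hz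
          exact max_eq_right (by linarith)
        have hdecomp : f = fun z => (δ * χ z + g z) + m := by
          funext z
          by_cases hz : z ∈ T
          · have hMz : M ≤ f z := (hTmem z).mp hz
            show f z = (δ * (if z ∈ T then (1:ℝ) else 0) + max (f z - M) 0) + m
            rw [if_pos hz, max_eq_left (by linarith)]
            ring
          · show f z = (δ * (if z ∈ T then (1:ℝ) else 0) + max (f z - M) 0) + m
            have hfz := hnotT z hz
            rw [if_neg hz, max_eq_right (by linarith)]
            rw [hfz]; ring
        -- induction hypothesis applies to g
        have hcard : (Finset.image g Finset.univ).card ≤ k := by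
          have himg : Finset.image g Finset.univ ⊆
              Finset.image (fun v => max (v - M) 0) V' := by
            intro b hb
            obtain ⟨z, -, rfl⟩ := Finset.mem_image.mp hb
            by_cases hz : f z = m
            · refine Finset.mem_image.mpr ⟨M, hMV', ?_⟩
              have h2 : g z = 0 := by
                show max (f z - M) 0 = 0
                rw [hz]; exact max_eq_right (by linarith)
              rw [h2]; simp
            · exact Finset.mem_image.mpr
                ⟨f z, Finset.mem_erase.mpr ⟨hz, hVmem z⟩, rfl⟩
          calc (Finset.image g Finset.univ).card
              ≤ (Finset.image (fun v => max (v - M) 0) V').card :=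
                Finset.card_le_card himg
            _ ≤ V'.card := Finset.card_image_le
            _ = V.card - 1 := by rw [hV', Finset.card_erase_of_mem (V.min'_mem hVne)]
            _ ≤ k := by omega
        have hIH := ih g hcard
        -- energy splitting
        have hsplit : FE p E f ≤ δ * FE p E χ + FE p E g := by
          calc FE p E f = FE p E (fun z => (δ * χ z + g z) + m) := by rw [← hdecomp]
            _ = FE p E (fun z => δ * χ z + g z) := fe_add_const hE _ m
            _ ≤ FE p E (fun z => δ * χ z) + FE p E g := fe_add hp hE _ g
            _ = δ * FE p E χ + FE p E g := by
                rw [fe_smul hp0.ne' hE δ χ, abs_of_pos hδ0]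
        -- indicator estimate
        have hχbd : FE p E χ ≤ K * ∑ x ∈ Tᶜ, ∑ y ∈ T, (pcost E x y) ^ p⁻¹ := by
          have h1 := indicator_bound hp hE T hTne hTcne
          have h2 : FE p E χ ≤ ((n:ℝ) ^ (2*p - 2) *
              ∑ x ∈ Tᶜ, ∑ y ∈ T, pcost E x y) ^ p⁻¹ := by
            refine Real.rpow_le_rpow (hE.1 _) ?_ (by positivity)
            exact h1
          have hsnn : (0:ℝ) ≤ ∑ x ∈ Tᶜ, ∑ y ∈ T, pcost E x y :=
            Finset.sum_nonneg fun x _ => Finset.sum_nonneg fun y _ =>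
              pcost_nonneg hE x y
          rw [Real.mul_rpow (Real.rpow_nonneg (Nat.cast_nonneg _) _) hsnn] at h2
          refine h2.trans (mul_le_mul_of_nonneg_left ?_ hK0)
          calc (∑ x ∈ Tᶜ, ∑ y ∈ T, pcost E x y) ^ p⁻¹
              = (∑ q ∈ Tᶜ ×ˢ T, pcost E q.1 q.2) ^ p⁻¹ := by
                rw [Finset.sum_product]
            _ ≤ ∑ q ∈ Tᶜ ×ˢ T, (pcost E q.1 q.2) ^ p⁻¹ :=
                rpow_sum_le_sum_rpow _ _ (fun q _ => pcost_nonneg hE _ _)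
                  (by positivity) (inv_le_one_of_one_le₀ hp.le)
            _ = ∑ x ∈ Tᶜ, ∑ y ∈ T, (pcost E x y) ^ p⁻¹ := by
                rw [Finset.sum_product]
        -- pair comparison
        have hpair : ∀ x y : A,
            (if x ∈ Tᶜ ∧ y ∈ T then δ * (pcost E x y) ^ p⁻¹ else 0)
              + (pco E x y) ^ p⁻¹ * |g x - g y|
            ≤ (pco E x y) ^ p⁻¹ * |f x - f y| := by
          intro x y
          have hlip : |g x - g y| ≤ |f x - f y| := by
            have h := abs_max_sub_max_le_abs (f x - M) (f y - M) 0
            rwa [sub_sub_sub_cancel_right] at h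
          by_cases hcase : x ∈ Tᶜ ∧ y ∈ T
          · obtain ⟨hx, hy⟩ := hcase
            rw [if_pos ⟨hx, hy⟩]
            have hxT : x ∉ T := Finset.mem_compl.mp hx
            have hfx : f x = m := hnotT x hxT
            have hfy : M ≤ f y := (hTmem y).mp hy
            have hxy : x ≠ y := fun h => hxT (h ▸ hy)
            have hpco : pco E x y = pcost E x y := if_neg hxy
            have hgx : g x = 0 := hgTc x hxT
            have hgy : g y = f y - M := hgT y hy
            have habsg : |g x - g y| = f y - M := by
              rw [hgx, hgy, zero_sub, abs_neg, abs_of_nonneg (by linarith)]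
            have habsf : |f x - f y| = f y - m := by
              rw [hfx, abs_sub_comm, abs_of_nonneg (by linarith)]
            rw [hpco, habsg, habsf, hδ]
            have : (0:ℝ) ≤ (pcost E x y) ^ p⁻¹ :=
              Real.rpow_nonneg (pcost_nonneg hE x y) _
            nlinarith
          · rw [if_neg hcase, zero_add]
            exact mul_le_mul_of_nonneg_left hlip
              (Real.rpow_nonneg (pco_nonneg hE x y) _)
        -- convert filtered double sum to full double sum
        have hconv : ∑ x ∈ Tᶜ, ∑ y ∈ T, δ * (pcost E x y) ^ p⁻¹
            = ∑ x : A, ∑ y : A,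
                (if x ∈ Tᶜ ∧ y ∈ T then δ * (pcost E x y) ^ p⁻¹ else 0) := by
          have h1 : ∀ x : A, ∑ y : A,
              (if x ∈ Tᶜ ∧ y ∈ T then δ * (pcost E x y) ^ p⁻¹ else 0)
              = if x ∈ Tᶜ then ∑ y ∈ T, δ * (pcost E x y) ^ p⁻¹ else 0 := by
            intro x
            by_cases hx : x ∈ Tᶜ
            · rw [if_pos hx]
              simp only [hx, true_and]
              rw [Finset.sum_ite_mem, Finset.univ_inter]
            · rw [if_neg hx]
              exact Finset.sum_eq_zero fun y _ => if_neg (by tauto)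
          rw [Finset.sum_congr rfl fun x _ => h1 x, Finset.sum_ite_mem,
            Finset.univ_inter]
        -- final combination
        calc FE p E f ≤ δ * FE p E χ + FE p E g := hsplit
          _ ≤ δ * (K * ∑ x ∈ Tᶜ, ∑ y ∈ T, (pcost E x y) ^ p⁻¹)
              + K * ∑ x : A, ∑ y : A, (pco E x y) ^ p⁻¹ * |g x - g y| :=
              add_le_add (mul_le_mul_of_nonneg_left hχbd hδ0.le) hIH
          _ = K * ((∑ x ∈ Tᶜ, ∑ y ∈ T, δ * (pcost E x y) ^ p⁻¹)
              + ∑ x : A, ∑ y : A, (pco E x y) ^ p⁻¹ * |g x - g y|) := by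
              have hmulsum : ∑ x ∈ Tᶜ, ∑ y ∈ T, δ * (pcost E x y) ^ p⁻¹
                  = δ * ∑ x ∈ Tᶜ, ∑ y ∈ T, (pcost E x y) ^ p⁻¹ := by
                rw [Finset.mul_sum]
                exact Finset.sum_congr rfl fun x _ => (Finset.mul_sum _ _ _).symm
              rw [hmulsum]
              ring
          _ ≤ K * ∑ x : A, ∑ y : A, (pco E x y) ^ p⁻¹ * |f x - f y| := by
              refine mul_le_mul_of_nonneg_left ?_ hK0
              rw [hconv, ← Finset.sum_add_distrib]
              refine Finset.sum_le_sum fun x _ => ?_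
              rw [← Finset.sum_add_distrib]
              exact Finset.sum_le_sum fun y _ => hpair x y


lemma term_le (hp : 1 < p) (hE : IsPEnergyT p E) (f : A → ℝ) (x y : A) :
    pco E x y * |f x - f y| ^ p ≤ E f := by
  have hp0 : (0:ℝ) < p := lt_trans one_pos hp
  unfold pco
  by_cases h : x = y
  · rw [if_pos h, zero_mul]; exact hE.1 f
  · rw [if_neg h]
    by_cases hfe : f x = f y
    · rw [hfe, sub_self, abs_zero, Real.zero_rpow hp0.ne', mul_zero]
      exact hE.1 f
    · set d := f y - f x with hd
      have hd0 : d ≠ 0 := sub_ne_zero.mpr (Ne.symm hfe)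
      have hgx : d⁻¹ * (f x + -(f x)) = 0 := by ring
      have hgy : d⁻¹ * (f y + -(f x)) = 1 := by
        have h1 : f y + -(f x) = d := by rw [hd]; ring
        rw [h1]; exact inv_mul_cancel₀ hd0
      have hEg : E (fun z => d⁻¹ * (f z + -(f x))) = |d⁻¹| ^ p * E f :=
        (hE.2.2.1 (fun z => f z + -(f x)) d⁻¹).trans
          (by rw [hE.2.2.2.1 f (-(f x))])
      have hle : pcost E x y ≤ |d⁻¹| ^ p * E f :=
        hEg ▸ pcost_le hE (g := fun z => d⁻¹ * (f z + -(f x))) hgx hgy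
      have habs : |f x - f y| = |d| := by rw [hd, abs_sub_comm]
      have hcancel : |d⁻¹| ^ p * |d| ^ p = 1 := by
        rw [← Real.mul_rpow (abs_nonneg _) (abs_nonneg _), ← abs_mul,
          inv_mul_cancel₀ hd0, abs_one, Real.one_rpow]
      calc pcost E x y * |f x - f y| ^ p
          ≤ (|d⁻¹| ^ p * E f) * |d| ^ p := by
            rw [habs]
            exact mul_le_mul_of_nonneg_right hle
              (Real.rpow_nonneg (abs_nonneg _) _)
        _ = E f * (|d⁻¹| ^ p * |d| ^ p) := by ring
        _ = E f := by rw [hcancel, mul_one]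

end FinA

end PEaux

/-- There is `C > 0` depending only on `#A` and `p` so that for any `p`-energy
`E` the standard form `Ē` with coefficients `R(x,y)⁻¹` satisfies
`C⁻¹ Ē(f) ≤ E(f) ≤ C Ē(f)` for all `f`. -/
theorem pEnergy_comparable_stdForm {A : Type*} [Fintype A] [DecidableEq A]
    (hA : 2 ≤ Fintype.card A) (p : ℝ) (hp : 1 < p) :
    ∃ C : ℝ, 0 < C ∧
      ∀ E : (A → ℝ) → ℝ, IsPEnergyT p E → ∀ f : A → ℝ,
        C⁻¹ * stdForm p E f ≤ E f ∧ E f ≤ C * stdForm p E f := by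
  classical
  open PEaux in
  set n := Fintype.card A with hn
  have hp0 : (0:ℝ) < p := lt_trans one_pos hp
  have hn1 : (1:ℝ) ≤ (n:ℝ) := by exact_mod_cast (by omega : 1 ≤ n)
  have hnpos : (0:ℝ) < (n:ℝ) := lt_of_lt_of_le one_pos hn1
  refine ⟨(n:ℝ) ^ (4*p), Real.rpow_pos_of_pos hnpos _, ?_⟩
  set C := (n:ℝ) ^ (4*p) with hC
  have hCpos : (0:ℝ) < C := Real.rpow_pos_of_pos hnpos _
  intro E hE f
  have hSnn : (0:ℝ) ≤ ∑ x : A, ∑ y : A, pco E x y * |f x - f y| ^ p :=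
    Finset.sum_nonneg fun x _ => Finset.sum_nonneg fun y _ =>
      mul_nonneg (pco_nonneg hE x y) (Real.rpow_nonneg (abs_nonneg _) _)
  constructor
  · -- lower bound
    have h1 : stdForm p E f ≤ (n:ℝ) * (n:ℝ) * E f := by
      rw [stdForm_eq hE f]
      calc ∑ x : A, ∑ y : A, pco E x y * |f x - f y| ^ p
          ≤ ∑ _x : A, ∑ _y : A, E f :=
            Finset.sum_le_sum fun x _ => Finset.sum_le_sum fun y _ =>
              term_le hp hE f x y
        _ = (n:ℝ) * (n:ℝ) * E f := by
            simp [Finset.sum_const, Finset.card_univ, nsmul_eq_mul]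
            ring
    have hnnC : (n:ℝ) * (n:ℝ) ≤ C := by
      have h2 : (n:ℝ) * (n:ℝ) = (n:ℝ) ^ ((2:ℕ):ℝ) := by
        rw [Real.rpow_natCast]; ring
      rw [h2, hC]
      exact Real.rpow_le_rpow_of_exponent_le hn1 (by push_cast; linarith)
    have h3 : stdForm p E f ≤ C * E f :=
      h1.trans (mul_le_mul_of_nonneg_right hnnC (hE.1 f))
    rw [inv_mul_le_iff₀ hCpos]
    exact h3
  · -- upper bound
    have hstar := star hA hp hE (Finset.image f Finset.univ).card f (le_refl _)
    set K := ((n:ℝ) ^ (2*p - 2)) ^ p⁻¹ with hK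
    have hK0 : (0:ℝ) ≤ K := Real.rpow_nonneg (Real.rpow_nonneg hnpos.le _) _
    set Sf := ∑ x : A, ∑ y : A, (pco E x y) ^ p⁻¹ * |f x - f y| with hSf
    have hSfnn : 0 ≤ Sf :=
      Finset.sum_nonneg fun x _ => Finset.sum_nonneg fun y _ =>
        mul_nonneg (Real.rpow_nonneg (pco_nonneg hE x y) _) (abs_nonneg _)
    have hEf : E f ≤ (K * Sf) ^ p := en_le_of_fe_le hp0 hE hstar
    rw [Real.mul_rpow hK0 hSfnn] at hEf
    have hKp : K ^ p = (n:ℝ) ^ (2*p - 2) :=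
      Real.rpow_inv_rpow (Real.rpow_nonneg hnpos.le _) hp0.ne'
    have hSfp : Sf ^ p ≤ (((n:ℝ) * (n:ℝ))) ^ (p-1) *
        ∑ x : A, ∑ y : A, pco E x y * |f x - f y| ^ p := by
      have h1 : Sf = ∑ q ∈ (Finset.univ ×ˢ Finset.univ : Finset (A × A)),
          (pco E q.1 q.2) ^ p⁻¹ * |f q.1 - f q.2| := by
        rw [hSf, Finset.sum_product]
      have hcardeq : (((Finset.univ ×ˢ Finset.univ : Finset (A × A)).card : ℝ))
          = (n:ℝ) * (n:ℝ) := by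
        rw [Finset.card_product, Finset.card_univ]
        push_cast
        ring
      calc Sf ^ p = (∑ q ∈ (Finset.univ ×ˢ Finset.univ : Finset (A × A)),
            (pco E q.1 q.2) ^ p⁻¹ * |f q.1 - f q.2|) ^ p := by rw [h1]
        _ ≤ (((Finset.univ ×ˢ Finset.univ : Finset (A × A)).card : ℝ)) ^ (p-1) *
            ∑ q ∈ (Finset.univ ×ˢ Finset.univ : Finset (A × A)),
              ((pco E q.1 q.2) ^ p⁻¹ * |f q.1 - f q.2|) ^ p :=
            sum_rpow_le_card_mul _ _
              (fun q _ => mul_nonneg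
                (Real.rpow_nonneg (pco_nonneg hE _ _) _) (abs_nonneg _)) hp.le
        _ = (((n:ℝ) * (n:ℝ))) ^ (p-1) *
            ∑ x : A, ∑ y : A, pco E x y * |f x - f y| ^ p := by
            rw [hcardeq]
            congr 1
            calc ∑ q ∈ (Finset.univ ×ˢ Finset.univ : Finset (A × A)),
                  ((pco E q.1 q.2) ^ p⁻¹ * |f q.1 - f q.2|) ^ p
                = ∑ q ∈ (Finset.univ ×ˢ Finset.univ : Finset (A × A)),
                  pco E q.1 q.2 * |f q.1 - f q.2| ^ p := by
                  refine Finset.sum_congr rfl fun q _ => ?_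
                  rw [Real.mul_rpow (Real.rpow_nonneg (pco_nonneg hE _ _) _)
                    (abs_nonneg _), Real.rpow_inv_rpow (pco_nonneg hE _ _) hp0.ne']
              _ = ∑ x : A, ∑ y : A, pco E x y * |f x - f y| ^ p := by
                  rw [Finset.sum_product]
    have hconst : (n:ℝ) ^ (2*p - 2) * (((n:ℝ) * (n:ℝ)) ^ (p-1)) ≤ C := by
      rw [Real.mul_rpow hnpos.le hnpos.le, ← Real.rpow_add hnpos (p-1) (p-1),
        ← Real.rpow_add hnpos]
      calc (n:ℝ) ^ (2*p - 2 + (p - 1 + (p - 1))) = (n:ℝ) ^ (4*p - 4) := by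
            ring_nf
        _ ≤ (n:ℝ) ^ (4*p) := Real.rpow_le_rpow_of_exponent_le hn1 (by linarith)
    calc E f ≤ K ^ p * Sf ^ p := hEf
      _ ≤ K ^ p * ((((n:ℝ) * (n:ℝ))) ^ (p-1) *
          ∑ x : A, ∑ y : A, pco E x y * |f x - f y| ^ p) := by
          refine mul_le_mul_of_nonneg_left hSfp ?_
          exact Real.rpow_nonneg hK0 _
      _ = ((n:ℝ) ^ (2*p - 2) * (((n:ℝ) * (n:ℝ)) ^ (p-1))) *
          ∑ x : A, ∑ y : A, pco E x y * |f x - f y| ^ p := by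
          rw [hKp]; ring
      _ ≤ C * ∑ x : A, ∑ y : A, pco E x y * |f x - f y| ^ p :=
          mul_le_mul_of_nonneg_right hconst hSnn
      _ = C * stdForm p E f := by rw [stdForm_eq hE f]
end

section
/- Let A be a finite set, 1<p<∞, and Ē the resistance comparison form from the previous construction: Ē(f) = Σ_{x≠y} R(x,y)⁻¹|f(x)-f(y)|^p with resistance R̄. Then for all distinct x,y ∈ A, R̄(x,y) ≤ R(x,y) and R̄(x,y) ≥ (#A)^{-p-2} R(x,y). -/
open scoped ENNReal

/-- A (nondegenerate) `p`-energy on `A`: nonnegative, convex, `p`-homogeneous,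
invariant under addition of constants, Markovian, nondegenerate. -/
def IsPEnergy {A : Type*} (p : ℝ) (E : (A → ℝ) → ℝ) : Prop :=
  (∀ f : A → ℝ, 0 ≤ E f) ∧
  (∀ f g : A → ℝ, ∀ t : ℝ, 0 < t → t < 1 →
      E (fun x => t * f x + (1 - t) * g x) ≤ t * E f + (1 - t) * E g) ∧
  (∀ (f : A → ℝ) (t : ℝ), E (fun x => t * f x) = |t| ^ p * E f) ∧
  (∀ (f : A → ℝ) (c : ℝ), E (fun x => f x + c) = E f) ∧
  (∀ f : A → ℝ, E (fun x => min (max (f x) 0) 1) ≤ E f) ∧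
  (∀ f : A → ℝ, E f = 0 ↔ ∃ c : ℝ, ∀ x, f x = c)

section Aux

variable {A : Type*} [DecidableEq A]

lemma aux_adm_nonempty {x y : A} (hxy : x ≠ y) :
    {f : A → ℝ | f x = 0 ∧ f y = 1}.Nonempty :=
  ⟨fun z => if z = y then 1 else 0, by simp [hxy], by simp⟩

lemma aux_bddBelow (E : (A → ℝ) → ℝ) (hE0 : ∀ f, 0 ≤ E f) (x y : A) :
    BddBelow (E '' {f : A → ℝ | f x = 0 ∧ f y = 1}) :=
  ⟨0, by rintro a ⟨f, -, rfl⟩; exact hE0 f⟩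

lemma aux_sInf_nonneg (E : (A → ℝ) → ℝ) (hE0 : ∀ f, 0 ≤ E f) (x y : A) :
    0 ≤ sInf (E '' {f : A → ℝ | f x = 0 ∧ f y = 1}) :=
  Real.sInf_nonneg (by rintro a ⟨f, -, rfl⟩; exact hE0 f)

lemma aux_pRes_inv_toReal (E : (A → ℝ) → ℝ) (hE0 : ∀ f, 0 ≤ E f)
    {x y : A} (hxy : x ≠ y) :
    ((pRes E x y)⁻¹).toReal = sInf (E '' {f : A → ℝ | f x = 0 ∧ f y = 1}) := by
  rw [pRes, if_neg hxy, inv_inv, ENNReal.toReal_ofReal (aux_sInf_nonneg E hE0 x y)]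

/-- The basic resistance inequality: `R(z,w)⁻¹ |g z - g w|^p ≤ E g`. -/
lemma aux_key (p : ℝ) (hp : 1 < p) (E : (A → ℝ) → ℝ) (hE : IsPEnergy p E)
    (g : A → ℝ) (z w : A) :
    ((pRes E z w)⁻¹).toReal * |g z - g w| ^ p ≤ E g := by
  rcases eq_or_ne z w with rfl | hzw
  · simpa [pRes] using hE.1 g
  rw [aux_pRes_inv_toReal E hE.1 hzw]
  rcases eq_or_ne (g z) (g w) with he | he
  · rw [he, sub_self, abs_zero, Real.zero_rpow (by linarith), mul_zero]
    exact hE.1 g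
  · set d := g w - g z with hd
    have hd0 : d ≠ 0 := sub_ne_zero.2 (Ne.symm he)
    have hmem : (fun u => d⁻¹ * (g u + -(g z))) ∈ {f : A → ℝ | f z = 0 ∧ f w = 1} := by
      constructor
      · simp
      · show d⁻¹ * (g w + -(g z)) = 1
        rw [hd]
        have : g w - g z ≠ 0 := sub_ne_zero.2 (Ne.symm he)
        field_simp
        ring
    have hle : sInf (E '' {f : A → ℝ | f z = 0 ∧ f w = 1}) ≤ |d|⁻¹ ^ p * E g := by
      calc sInf (E '' {f : A → ℝ | f z = 0 ∧ f w = 1})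
          ≤ E (fun u => d⁻¹ * (g u + -(g z))) :=
            csInf_le (aux_bddBelow E hE.1 z w) (Set.mem_image_of_mem E hmem)
        _ = |d⁻¹| ^ p * E (fun u => g u + -(g z)) := hE.2.2.1 _ _
        _ = |d|⁻¹ ^ p * E g := by rw [hE.2.2.2.1 g (-(g z)), abs_inv]
    have habs : |g z - g w| = |d| := by rw [hd, abs_sub_comm]
    rw [habs]
    have hdp : 0 < |d| ^ p := Real.rpow_pos_of_pos (abs_pos.2 hd0) p
    rw [Real.inv_rpow (abs_nonneg d)] at hle
    calc sInf (E '' {f : A → ℝ | f z = 0 ∧ f w = 1}) * |d| ^ p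
        ≤ (|d| ^ p)⁻¹ * E g * |d| ^ p := mul_le_mul_of_nonneg_right hle hdp.le
      _ = E g := by field_simp

end Aux

section AuxFin

variable {A : Type*} [Fintype A] [DecidableEq A]

lemma aux_stdForm_nonneg (p : ℝ) (E : (A → ℝ) → ℝ) (g : A → ℝ) :
    0 ≤ stdForm p E g :=
  Finset.sum_nonneg fun _ _ => Finset.sum_nonneg fun _ _ =>
    mul_nonneg ENNReal.toReal_nonneg (Real.rpow_nonneg (abs_nonneg _) p)

lemma aux_stdForm_le (p : ℝ) (hp : 1 < p) (E : (A → ℝ) → ℝ) (hE : IsPEnergy p E)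
    (g : A → ℝ) :
    stdForm p E g ≤ (Fintype.card A : ℝ) * (Fintype.card A : ℝ) * E g := by
  have h : stdForm p E g ≤ ∑ _z : A, ∑ _w : A, E g :=
    Finset.sum_le_sum fun z _ => Finset.sum_le_sum fun w _ => aux_key p hp E hE g z w
  calc stdForm p E g ≤ ∑ _z : A, ∑ _w : A, E g := h
    _ = (Fintype.card A : ℝ) * (Fintype.card A : ℝ) * E g := by
        simp [Finset.sum_const, Finset.card_univ, nsmul_eq_mul, mul_assoc]

end AuxFin

/-- With `R̄` the resistance of the standard form `Ē`, one has, for all distinct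
`x, y`: `R̄(x,y) ≤ R(x,y)` and `R̄(x,y) ≥ (#A)^{-p-2} R(x,y)`. -/
theorem stdForm_res_comparable {A : Type*} [Fintype A] [DecidableEq A]
    (hA : 2 ≤ Fintype.card A) (p : ℝ) (hp : 1 < p)
    (E : (A → ℝ) → ℝ) (hE : IsPEnergy p E)
    (x y : A) (hxy : x ≠ y) :
    pRes (stdForm p E) x y ≤ pRes E x y ∧
    ENNReal.ofReal ((Fintype.card A : ℝ) ^ (-p - 2)) * pRes E x y ≤
      pRes (stdForm p E) x y := by
  set m := sInf (E '' {f : A → ℝ | f x = 0 ∧ f y = 1}) with hm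
  set M := sInf (stdForm p E '' {f : A → ℝ | f x = 0 ∧ f y = 1}) with hM
  have hm0 : 0 ≤ m := aux_sInf_nonneg E hE.1 x y
  set N : ℝ := (Fintype.card A : ℝ) with hN
  have hN2 : (2 : ℝ) ≤ N := by rw [hN]; exact_mod_cast hA
  have hN1 : (1 : ℝ) ≤ N := by linarith
  -- each admissible f satisfies m ≤ stdForm p E f
  have hlow : ∀ f ∈ {f : A → ℝ | f x = 0 ∧ f y = 1}, m ≤ stdForm p E f := by
    rintro f ⟨hfx, hfy⟩
    have hterm : ((pRes E x y)⁻¹).toReal * |f x - f y| ^ p = m := by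
      rw [aux_pRes_inv_toReal E hE.1 hxy, hfx, hfy]
      norm_num
      exact hm.symm
    have h1 : ((pRes E x y)⁻¹).toReal * |f x - f y| ^ p
        ≤ ∑ w : A, ((pRes E x w)⁻¹).toReal * |f x - f w| ^ p :=
      Finset.single_le_sum (f := fun w => ((pRes E x w)⁻¹).toReal * |f x - f w| ^ p)
        (fun w _ => mul_nonneg ENNReal.toReal_nonneg (Real.rpow_nonneg (abs_nonneg _) p))
        (Finset.mem_univ y)
    have h2 : (∑ w : A, ((pRes E x w)⁻¹).toReal * |f x - f w| ^ p) ≤ stdForm p E f := by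
      rw [stdForm]
      exact Finset.single_le_sum
        (f := fun z => ∑ w : A, ((pRes E z w)⁻¹).toReal * |f z - f w| ^ p)
        (fun z _ => Finset.sum_nonneg fun w _ =>
          mul_nonneg ENNReal.toReal_nonneg (Real.rpow_nonneg (abs_nonneg _) p))
        (Finset.mem_univ x)
    calc m = ((pRes E x y)⁻¹).toReal * |f x - f y| ^ p := hterm.symm
      _ ≤ _ := h1
      _ ≤ _ := h2
  have hmM : m ≤ M :=
    le_csInf ((aux_adm_nonempty hxy).image _) (by rintro a ⟨f, hf, rfl⟩; exact hlow f hf)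
  -- M ≤ N * N * m
  have hMle : M ≤ N * N * m := by
    have hNN : (0 : ℝ) < N * N := by nlinarith
    have h1 : ∀ f ∈ {f : A → ℝ | f x = 0 ∧ f y = 1}, M / (N * N) ≤ E f := by
      intro f hf
      have hMf : M ≤ stdForm p E f :=
        csInf_le ⟨0, by rintro a ⟨g, -, rfl⟩; exact aux_stdForm_nonneg p E g⟩
          (Set.mem_image_of_mem _ hf)
      have := aux_stdForm_le p hp E hE f
      rw [div_le_iff₀ hNN]
      calc M ≤ stdForm p E f := hMf
        _ ≤ N * N * E f := this
        _ = E f * (N * N) := by ring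
    have h2 : M / (N * N) ≤ m :=
      le_csInf ((aux_adm_nonempty hxy).image _) (by rintro a ⟨f, hf, rfl⟩; exact h1 f hf)
    calc M = M / (N * N) * (N * N) := by field_simp
      _ ≤ m * (N * N) := mul_le_mul_of_nonneg_right h2 hNN.le
      _ = N * N * m := by ring
  constructor
  · -- R̄ ≤ R
    rw [pRes, pRes, if_neg hxy, if_neg hxy]
    exact ENNReal.inv_le_inv.2 (ENNReal.ofReal_le_ofReal hmM)
  · -- lower bound
    rw [pRes, pRes, if_neg hxy, if_neg hxy]
    set c : ℝ := N ^ (p + 2) with hc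
    have hc0 : 0 < c := Real.rpow_pos_of_pos (by linarith) _
    have hNc : N * N ≤ c := by
      have : N ^ (2 : ℝ) ≤ N ^ (p + 2) :=
        Real.rpow_le_rpow_of_exponent_le hN1 (by linarith)
      calc N * N = N ^ (2 : ℕ) := by ring
        _ = N ^ ((2 : ℕ) : ℝ) := (Real.rpow_natCast N 2).symm
        _ = N ^ (2 : ℝ) := by norm_num
        _ ≤ c := this
    have hMcm : M ≤ c * m :=
      hMle.trans (mul_le_mul_of_nonneg_right hNc hm0)
    have hexp : N ^ (-p - 2) = c⁻¹ := by
      rw [hc, show -p - 2 = -(p + 2) by ring, Real.rpow_neg (by linarith)]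
    have hmain : ENNReal.ofReal M ≤ ENNReal.ofReal c * ENNReal.ofReal m := by
      rw [← ENNReal.ofReal_mul hc0.le]
      exact ENNReal.ofReal_le_ofReal hMcm
    calc ENNReal.ofReal (N ^ (-p - 2)) * (ENNReal.ofReal m)⁻¹
        = (ENNReal.ofReal c)⁻¹ * (ENNReal.ofReal m)⁻¹ := by
          rw [hexp, ENNReal.ofReal_inv_of_pos hc0]
      _ = (ENNReal.ofReal c * ENNReal.ofReal m)⁻¹ := by
          rw [ENNReal.mul_inv (Or.inl (by simp [hc0])) (Or.inl ENNReal.ofReal_ne_top)]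
      _ ≤ (ENNReal.ofReal M)⁻¹ := ENNReal.inv_le_inv.2 hmain
end

section
/- Let A be a finite set and E a nondegenerate p-energy on A with resistance R. Suppose J, J' are two non-trivial equivalence relations on A such that δ_J(E) < 1 and δ_{J'}(E) < 1, where δ_J(E) = (max_{x J y, x≠y} R(x,y)) / (min over non-J-equivalent pairs of R(x,y)). Then either J ⊆ J' or J' ⊆ J. -/
/-- The real-valued `p`-resistance `R(x,y) = (inf{E f : f x = 0, f y = 1})⁻¹`. -/
noncomputable def rRes {A : Type*} (E : (A → ℝ) → ℝ) (x y : A) : ℝ :=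
  (sInf (E '' {f : A → ℝ | f x = 0 ∧ f y = 1}))⁻¹

/-- A non-trivial equivalence relation on `A`: neither equality nor the total
relation. -/
def IsNontrivialEquiv {A : Type*} (J : A → A → Prop) : Prop :=
  Equivalence J ∧ (∃ x y : A, x ≠ y ∧ J x y) ∧ (∃ x y : A, ¬ J x y)

/-- `δ_J(E) = (max_{x J y, x ≠ y} R(x,y)) / (min_{¬ x J y} R(x,y))`. -/
noncomputable def deltaJ {A : Type*} (E : (A → ℝ) → ℝ) (J : A → A → Prop) : ℝ :=
  sSup {d : ℝ | ∃ x y : A, x ≠ y ∧ J x y ∧ d = rRes E x y} /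
    sInf {d : ℝ | ∃ x y : A, ¬ J x y ∧ d = rRes E x y}

/-- A `p`-energy is convex. -/
lemma IsPEnergy.convexOn {A : Type*} {p : ℝ} {E : (A → ℝ) → ℝ}
    (hE : IsPEnergy p E) : ConvexOn ℝ Set.univ E := by
  refine ⟨convex_univ, fun f _ g _ a b ha hb hab => ?_⟩
  rcases eq_or_lt_of_le ha with ha0 | ha0
  · have hb1 : b = 1 := by linarith
    simp [← ha0, hb1]
  rcases eq_or_lt_of_le hb with hb0 | hb0
  · have ha1 : a = 1 := by linarith
    simp [← hb0, ha1]
  have ha1 : a < 1 := by linarith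
  have := hE.2.1 f g a ha0 ha1
  have hba : b = 1 - a := by linarith
  subst hba
  exact this

/-- Positivity of the resistance for distinct points. -/
lemma rRes_pos {A : Type*} [Fintype A] {p : ℝ} {E : (A → ℝ) → ℝ}
    (hE : IsPEnergy p E) {x y : A} (hxy : x ≠ y) : 0 < rRes E x y := by
  classical
  set S : Set (A → ℝ) := {f : A → ℝ | f x = 0 ∧ f y = 1} with hS
  -- the compact set of [0,1]-valued admissible functions
  set K : Set (A → ℝ) := Set.Icc 0 1 ∩ S with hK
  have hKc : IsCompact K := isCompact_Icc.inter_right (by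
    have : S = (fun f : A → ℝ => f x) ⁻¹' {0} ∩ (fun f : A → ℝ => f y) ⁻¹' {1} := by
      ext f; simp [hS]
    rw [this]
    exact ((isClosed_singleton.preimage (continuous_apply x)).inter
      (isClosed_singleton.preimage (continuous_apply y))))
  have hf₁ : (fun z : A => if z = y then (1:ℝ) else 0) ∈ K := by
    constructor
    · constructor <;> intro z <;> by_cases hz : z = y <;> simp [hz]
    · constructor
      · simp [hxy]
      · simp
  have hKne : K.Nonempty := ⟨_, hf₁⟩
  have hcont : ContinuousOn E K :=
    ((hE.convexOn.continuousOn isOpen_univ).mono (Set.subset_univ K))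
  obtain ⟨f₀, hf₀K, hmin⟩ := hKc.exists_isMinOn hKne hcont
  have hf₀pos : 0 < E f₀ := by
    rcases lt_or_eq_of_le (hE.1 f₀) with h | h
    · exact h
    · exfalso
      obtain ⟨c, hc⟩ := (hE.2.2.2.2.2 f₀).mp h.symm
      have h1 : f₀ x = 0 := hf₀K.2.1
      have h2 : f₀ y = 1 := hf₀K.2.2
      rw [hc x] at h1; rw [hc y] at h2
      exact one_ne_zero (h2 ▸ h1 ▸ rfl : (1:ℝ) = 0)
  -- every admissible function has energy at least E f₀
  have hlow : ∀ e ∈ E '' S, E f₀ ≤ e := by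
    rintro e ⟨f, ⟨hfx, hfy⟩, rfl⟩
    set g : A → ℝ := fun z => min (max (f z) 0) 1 with hg
    have hgK : g ∈ K := by
      constructor
      · constructor <;> intro z <;> simp [hg, le_max_right, le_min_iff, min_le_right]
      · constructor
        · simp [hg, hfx]
        · simp [hg, hfy]
    calc E f₀ ≤ E g := hmin hgK
    _ ≤ E f := hE.2.2.2.2.1 f
  have hSne : (E '' S).Nonempty := ⟨_, ⟨_, hf₁.2, rfl⟩⟩
  have hInf : E f₀ ≤ sInf (E '' S) := le_csInf hSne hlow
  have : 0 < sInf (E '' S) := lt_of_lt_of_le hf₀pos hInf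
  exact inv_pos.mpr this

/-- The set of resistance values indexed by pairs is finite. -/
lemma res_set_finite {A : Type*} [Fintype A] (E : (A → ℝ) → ℝ)
    (P : A → A → Prop) : {d : ℝ | ∃ x y : A, P x y ∧ d = rRes E x y}.Finite := by
  apply Set.Finite.subset (Set.finite_range (fun q : A × A => rRes E q.1 q.2))
  rintro d ⟨x, y, _, rfl⟩
  exact ⟨(x, y), rfl⟩

/-- From `δ_J(E) < 1` we get: every resistance within a class is strictly less
than every resistance across classes. -/
lemma key_sep {A : Type*} [Fintype A] {p : ℝ} {E : (A → ℝ) → ℝ}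
    (hE : IsPEnergy p E) {J : A → A → Prop} (hJ : IsNontrivialEquiv J)
    (hδ : deltaJ E J < 1) :
    ∀ x y u v : A, x ≠ y → J x y → ¬ J u v →
      rRes E x y < rRes E u v := by
  intro x y u v hxy hJxy hJuv
  set Ssup : Set ℝ := {d : ℝ | ∃ x y : A, x ≠ y ∧ J x y ∧ d = rRes E x y} with hSsup
  set Sinf : Set ℝ := {d : ℝ | ∃ x y : A, ¬ J x y ∧ d = rRes E x y} with hSinf
  have hfin1 : Ssup.Finite := by
    apply Set.Finite.subset (Set.finite_range (fun q : A × A => rRes E q.1 q.2))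
    rintro d ⟨a, b, _, _, rfl⟩; exact ⟨(a, b), rfl⟩
  have hfin2 : Sinf.Finite := by
    apply Set.Finite.subset (Set.finite_range (fun q : A × A => rRes E q.1 q.2))
    rintro d ⟨a, b, _, rfl⟩; exact ⟨(a, b), rfl⟩
  have hne2 : Sinf.Nonempty := ⟨_, u, v, hJuv, rfl⟩
  have hmem2 : sInf Sinf ∈ Sinf := hne2.csInf_mem hfin2
  have hpos2 : 0 < sInf Sinf := by
    obtain ⟨a, b, hab, heq⟩ := hmem2
    have : a ≠ b := fun h => hab (h ▸ hJ.1.refl a)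
    exact heq ▸ rRes_pos hE this
  have hlt : sSup Ssup < sInf Sinf := by
    have := (div_lt_one hpos2).mp hδ
    exact this
  have h1 : rRes E x y ≤ sSup Ssup :=
    le_csSup hfin1.bddAbove ⟨x, y, hxy, hJxy, rfl⟩
  have h2 : sInf Sinf ≤ rRes E u v :=
    csInf_le hfin2.bddBelow ⟨u, v, hJuv, rfl⟩
  linarith

/-- If `J` and `J'` are non-trivial equivalence relations with
`δ_J(E) < 1` and `δ_{J'}(E) < 1`, then `J ⊆ J'` or `J' ⊆ J`. -/
theorem deltaJ_lt_one_comparable {A : Type*} [Fintype A]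
    (hA : 2 ≤ Fintype.card A) (p : ℝ) (hp : 1 < p)
    (E : (A → ℝ) → ℝ) (hE : IsPEnergy p E)
    (J J' : A → A → Prop)
    (hJ : IsNontrivialEquiv J) (hJ' : IsNontrivialEquiv J')
    (hδ : deltaJ E J < 1) (hδ' : deltaJ E J' < 1) :
    (∀ x y : A, J x y → J' x y) ∨ (∀ x y : A, J' x y → J x y) := by
  by_contra hcon
  push_neg at hcon
  obtain ⟨⟨x, y, hJxy, hJ'xy⟩, ⟨u, v, hJ'uv, hJuv⟩⟩ := hcon
  have hxy : x ≠ y := fun h => hJ'xy (h ▸ hJ'.1.refl x)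
  have huv : u ≠ v := fun h => hJuv (h ▸ hJ.1.refl u)
  have h1 : rRes E x y < rRes E u v := key_sep hE hJ hδ x y u v hxy hJxy hJuv
  have h2 : rRes E u v < rRes E x y := key_sep hE hJ' hδ' u v x y huv hJ'uv hJ'xy
  linarith
end

section
/- Let A be a finite set, E a nondegenerate p-energy on A with resistance R, and suppose 0 < δ < (#A)^{-#A(#A-1)p/2} and δ(E) := min_{x≠y}R(x,y) / max_{x≠y}R(x,y) < δ. Then there exists a non-trivial equivalence relation J on A with δ_J(E) < δ^{2/(#A(#A-1))} · (#A)^p. -/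
/-- `δ(E) = (min_{x ≠ y} R(x,y)) / (max_{x ≠ y} R(x,y))`. -/
noncomputable def deltaE {A : Type*} (E : (A → ℝ) → ℝ) : ℝ :=
  sInf {d : ℝ | ∃ x y : A, x ≠ y ∧ d = rRes E x y} /
    sSup {d : ℝ | ∃ x y : A, x ≠ y ∧ d = rRes E x y}

noncomputable def cE {A : Type*} (E : (A → ℝ) → ℝ) (x y : A) : ℝ :=
  sInf (E '' {f : A → ℝ | f x = 0 ∧ f y = 1})

section Aux
variable {A : Type*} {p : ℝ} {E : (A → ℝ) → ℝ}

lemma setS_nonempty {x y : A} (h : x ≠ y) :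
    {f : A → ℝ | f x = 0 ∧ f y = 1}.Nonempty :=
  by classical exact ⟨fun z => if z = y then 1 else 0, by simp [h], by simp⟩

lemma cE_nonneg (hE : IsPEnergy p E) (x y : A) : 0 ≤ cE E x y :=
  Real.sInf_nonneg (by rintro _ ⟨f, _, rfl⟩; exact hE.1 f)

lemma cE_bddBelow (hE : IsPEnergy p E) (x y : A) :
    BddBelow (E '' {f : A → ℝ | f x = 0 ∧ f y = 1}) :=
  ⟨0, by rintro _ ⟨f, _, rfl⟩; exact hE.1 f⟩

/-- key inequality: `|f x - f y|^p * cE ≤ E f`. -/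
lemma key_ineq (hE : IsPEnergy p E) (hp : 0 < p) (x y : A) (f : A → ℝ) :
    |f x - f y| ^ p * cE E x y ≤ E f := by
  rcases eq_or_ne (f x) (f y) with h | h
  · rw [h, sub_self, abs_zero, Real.zero_rpow hp.ne', zero_mul]
    exact hE.1 f
  · set s : ℝ := f y - f x with hs
    have hs0 : s ≠ 0 := sub_ne_zero.mpr (Ne.symm h)
    set g : A → ℝ := fun z => s⁻¹ * (f z + (-f x)) with hg
    have hgx : g x = 0 := by simp [hg]
    have hgy : g y = 1 := by
      rw [hg]; simp only [← sub_eq_add_neg, ← hs]; exact inv_mul_cancel₀ hs0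
    have hEg : E g = |s⁻¹| ^ p * E f := by
      rw [hg]
      rw [hE.2.2.1 (fun z => f z + (-f x)) s⁻¹, hE.2.2.2.1 f (-f x)]
    have hle : cE E x y ≤ E g := csInf_le (cE_bddBelow hE x y) ⟨g, ⟨hgx, hgy⟩, rfl⟩
    have habs : |f x - f y| = |s| := by rw [hs, abs_sub_comm]
    rw [habs]
    have hspos : (0:ℝ) < |s| := abs_pos.mpr hs0
    calc |s| ^ p * cE E x y ≤ |s| ^ p * E g := by
          apply mul_le_mul_of_nonneg_left hle (Real.rpow_nonneg (abs_nonneg s) p)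
      _ = |s| ^ p * (|s⁻¹| ^ p * E f) := by rw [hEg]
      _ = E f := by
          rw [abs_inv, Real.inv_rpow (abs_nonneg s), ← mul_assoc,
            mul_inv_cancel₀ (ne_of_gt (Real.rpow_pos_of_pos hspos p)), one_mul]

lemma cE_symm (hE : IsPEnergy p E) (x y : A) : cE E x y = cE E y x := by
  have himg : ∀ u v : A, E '' {f : A → ℝ | f u = 0 ∧ f v = 1} ⊆
      E '' {f : A → ℝ | f v = 0 ∧ f u = 1} := by
    intro u v
    rintro _ ⟨f, ⟨hfu, hfv⟩, rfl⟩
    refine ⟨fun z => (-1) * f z + 1, ⟨by simp [hfv], by simp [hfu]⟩, ?_⟩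
    rw [hE.2.2.2.1 (fun z => (-1) * f z) 1, hE.2.2.1 f (-1)]
    simp
  unfold cE
  rw [Set.Subset.antisymm (himg x y) (himg y x)]

lemma convexOn_E (hE : IsPEnergy p E) : ConvexOn ℝ Set.univ E := by
  refine ⟨convex_univ, fun f _ g _ a b ha hb hab => ?_⟩
  rcases eq_or_lt_of_le ha with h0 | hapos
  · have hb1 : b = 1 := by linarith
    have : a • f + b • g = g := by
      funext z; simp [← h0, hb1]
    rw [this, ← h0, hb1]; simp
  rcases eq_or_lt_of_le hb with h0 | hbpos
  · have ha1 : a = 1 := by linarith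
    have : a • f + b • g = f := by
      funext z; simp [← h0, ha1]
    rw [this, ← h0, ha1]; simp
  · have ha1 : a < 1 := by linarith
    have hb' : b = 1 - a := by linarith
    have : a • f + b • g = fun z => a * f z + (1 - a) * g z := by
      funext z; simp [hb', Pi.add_apply]
    rw [this, hb']
    exact hE.2.1 f g a hapos ha1

lemma continuous_E [Fintype A] (hE : IsPEnergy p E) : Continuous E := by
  rw [← continuousOn_univ]
  exact (convexOn_E hE).continuousOn isOpen_univ

lemma cE_pos [Fintype A] (hE : IsPEnergy p E) {x y : A} (h : x ≠ y) :
    0 < cE E x y := by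
  classical
  set K : Set (A → ℝ) := Set.Icc 0 1 ∩ {f | f x = 0 ∧ f y = 1} with hK
  have hKcpt : IsCompact K := by
    apply (isCompact_Icc (a := (0 : A → ℝ)) (b := 1)).inter_right
    exact (isClosed_singleton.preimage (continuous_apply x)).inter
      (isClosed_singleton.preimage (continuous_apply y))
  have hKne : K.Nonempty := by
    refine ⟨fun z => if z = y then 1 else 0, ⟨?_, by simp [h], by simp⟩⟩
    constructor <;> intro z <;> by_cases hz : z = y <;>
      simp [Pi.le_def, hz, Pi.zero_apply, Pi.one_apply]
  obtain ⟨f0, hf0K, hf0min⟩ := hKcpt.exists_isMinOn hKne (continuous_E hE).continuousOn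
  have hf0pos : 0 < E f0 := by
    rcases lt_or_eq_of_le (hE.1 f0) with hlt | heq
    · exact hlt
    · exfalso
      obtain ⟨c, hc⟩ := (hE.2.2.2.2.2 f0).mp heq.symm
      have h1 : (0:ℝ) = c := by rw [← hf0K.2.1]; exact hc x
      have h2 : (1:ℝ) = c := by rw [← hf0K.2.2]; exact hc y
      exact one_ne_zero (h2.trans h1.symm)
  refine lt_of_lt_of_le hf0pos (le_csInf ?_ ?_)
  · exact (setS_nonempty h).image E
  · rintro _ ⟨f, ⟨hfx, hfy⟩, rfl⟩
    have hclamp : (fun z => min (max (f z) 0) 1) ∈ K := by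
      refine ⟨⟨fun z => ?_, fun z => ?_⟩, by simp [hfx], by simp [hfy]⟩
      · simp [le_min_iff, le_max_iff]
      · simp
    exact le_trans (hf0min hclamp) (hE.2.2.2.2.1 f)

lemma cE_chain [Fintype A] (hE : IsPEnergy p E) (hp : 0 < p) {x z : A} (y : A)
    (hxz : x ≠ z) :
    (2:ℝ) ^ (-p) * min (cE E x y) (cE E y z) ≤ cE E x z := by
  refine le_csInf ((setS_nonempty hxz).image E) ?_
  rintro _ ⟨f, ⟨hfx, hfz⟩, rfl⟩
  have h2 : (1:ℝ) ≤ |f x - f y| + |f y - f z| := by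
    calc (1:ℝ) = |f x - f z| := by rw [hfx, hfz]; norm_num
      _ ≤ |f x - f y| + |f y - f z| := abs_sub_le _ _ _
  have hcase : (1:ℝ)/2 ≤ |f x - f y| ∨ (1:ℝ)/2 ≤ |f y - f z| := by
    by_contra hcon
    push_neg at hcon
    linarith [hcon.1, hcon.2]
  have hmain : ∀ u v : A, (1:ℝ)/2 ≤ |f u - f v| →
      (2:ℝ) ^ (-p) * cE E u v ≤ E f := by
    intro u v huv
    calc (2:ℝ) ^ (-p) * cE E u v = ((1:ℝ)/2) ^ p * cE E u v := by
          rw [Real.rpow_neg (by norm_num : (0:ℝ) ≤ 2)]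
          rw [← Real.inv_rpow (by norm_num : (0:ℝ) ≤ 2)]
          norm_num
      _ ≤ |f u - f v| ^ p * cE E u v := by
          apply mul_le_mul_of_nonneg_right _ (cE_nonneg hE u v)
          exact Real.rpow_le_rpow (by norm_num) huv hp.le
      _ ≤ E f := key_ineq hE hp u v f
  rcases hcase with hc | hc
  · calc (2:ℝ) ^ (-p) * min (cE E x y) (cE E y z)
        ≤ (2:ℝ) ^ (-p) * cE E x y := by
          apply mul_le_mul_of_nonneg_left (min_le_left _ _)
            (Real.rpow_nonneg (by norm_num) _)
      _ ≤ E f := hmain x y hc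
  · calc (2:ℝ) ^ (-p) * min (cE E x y) (cE E y z)
        ≤ (2:ℝ) ^ (-p) * cE E y z := by
          apply mul_le_mul_of_nonneg_left (min_le_right _ _)
            (Real.rpow_nonneg (by norm_num) _)
      _ ≤ E f := hmain y z hc

end Aux

lemma gap_pigeonhole (V : Finset ℝ) (hV : V.Nonempty) (K : ℝ) (hK : 1 ≤ K)
    (hpos : ∀ v ∈ V, (0:ℝ) < v)
    (H : ∀ a ∈ V, a < V.max' hV → ∃ b ∈ V, a < b ∧ b ≤ K * a) :
    ∀ n : ℕ, ∀ a ∈ V, (V.filter (a < ·)).card ≤ n → V.max' hV ≤ K ^ n * a := by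
  intro n
  induction n with
  | zero =>
    intro a ha hcard
    have hfe : V.filter (a < ·) = ∅ := Finset.card_eq_zero.mp (Nat.le_zero.mp hcard)
    have hle : V.max' hV ≤ a := by
      by_contra hcon
      push_neg at hcon
      have : V.max' hV ∈ V.filter (a < ·) :=
        Finset.mem_filter.mpr ⟨V.max'_mem hV, hcon⟩
      simp [hfe] at this
    simpa using hle
  | succ n ih =>
    intro a ha hcard
    by_cases hlt : a < V.max' hV
    · obtain ⟨b, hbV, hab, hbK⟩ := H a ha hlt
      have hsub : V.filter (b < ·) ⊆ (V.filter (a < ·)).erase b := by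
        intro v hv
        rw [Finset.mem_filter] at hv
        exact Finset.mem_erase.mpr ⟨(lt_irrefl b ∘ (· ▸ hv.2)),
          Finset.mem_filter.mpr ⟨hv.1, hab.trans hv.2⟩⟩
      have hbmem : b ∈ V.filter (a < ·) := Finset.mem_filter.mpr ⟨hbV, hab⟩
      have hcard' : (V.filter (b < ·)).card ≤ n := by
        have := Finset.card_le_card hsub
        rw [Finset.card_erase_of_mem hbmem] at this
        omega
      have hKn : (0:ℝ) ≤ K ^ n := pow_nonneg (by linarith) n
      calc V.max' hV ≤ K ^ n * b := ih b hbV hcard'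
        _ ≤ K ^ n * (K * a) := mul_le_mul_of_nonneg_left hbK hKn
        _ = K ^ (n + 1) * a := by ring
    · push_neg at hlt
      have hapos := hpos a ha
      calc V.max' hV ≤ a := hlt
        _ ≤ K ^ (n + 1) * a := le_mul_of_one_le_left hapos.le (one_le_pow₀ hK)

/-- If `0 < δ < (#A)^{-#A(#A-1)p/2}` and `δ(E) < δ`, then there is a non-trivial
equivalence relation `J` on `A` with `δ_J(E) < δ^{2/(#A(#A-1))} (#A)^p`. -/
theorem exists_nontrivial_rel_of_deltaE_small {A : Type*} [Fintype A]
    (hA : 2 ≤ Fintype.card A) (p : ℝ) (hp : 1 < p)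
    (E : (A → ℝ) → ℝ) (hE : IsPEnergy p E)
    (δ : ℝ) (hδ0 : 0 < δ)
    (hδ : δ < (Fintype.card A : ℝ) ^
      (-((Fintype.card A : ℝ) * ((Fintype.card A : ℝ) - 1) * p) / 2))
    (hsmall : deltaE E < δ) :
    ∃ J : A → A → Prop, IsNontrivialEquiv J ∧
      deltaJ E J <
        δ ^ (2 / ((Fintype.card A : ℝ) * ((Fintype.card A : ℝ) - 1))) *
          (Fintype.card A : ℝ) ^ p := by
  classical
  set n := Fintype.card A with hn
  have hp0 : (0:ℝ) < p := by linarith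
  have hn2 : (2:ℝ) ≤ (n:ℝ) := by exact_mod_cast hA
  have hn1 : (1:ℝ) < (n:ℝ) := by linarith
  have hrfl : ∀ x y : A, rRes E x y = (cE E x y)⁻¹ := fun _ _ => rfl
  have hsymm : ∀ x y : A, rRes E x y = rRes E y x := fun x y => by
    rw [hrfl, hrfl, cE_symm hE]
  set F : Sym2 A → ℝ := Sym2.lift ⟨fun x y => rRes E x y, fun x y => hsymm x y⟩
    with hF
  set D : Finset (Sym2 A) := Finset.univ.filter (fun s => ¬ s.IsDiag) with hD
  set V : Finset ℝ := D.image F with hV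
  have hVmem : ∀ d : ℝ, d ∈ V ↔ ∃ x y : A, x ≠ y ∧ d = rRes E x y := by
    intro d
    constructor
    · intro hd
      obtain ⟨s, hs, rfl⟩ := Finset.mem_image.mp hd
      induction s using Sym2.ind with
      | _ x y =>
        rw [hD, Finset.mem_filter] at hs
        exact ⟨x, y, fun hxy => hs.2 (by simp [hxy]), by simp [hF]⟩
    · rintro ⟨x, y, hxy, rfl⟩
      exact Finset.mem_image.mpr ⟨s(x, y), by simp [hD, hxy], by simp [hF]⟩
  have hVpos : ∀ v ∈ V, (0:ℝ) < v := by
    intro v hv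
    obtain ⟨x, y, hxy, rfl⟩ := (hVmem v).mp hv
    rw [hrfl]
    exact inv_pos.mpr (cE_pos hE hxy)
  have hVne : V.Nonempty := by
    obtain ⟨x, y, hxy⟩ := Fintype.exists_pair_of_one_lt_card (α := A) (by omega)
    exact ⟨rRes E x y, (hVmem _).mpr ⟨x, y, hxy, rfl⟩⟩
  set vmax := V.max' hVne with hvmax
  set vmin := V.min' hVne with hvmin
  have hsetV : {d : ℝ | ∃ x y : A, x ≠ y ∧ d = rRes E x y} = ↑V := by
    ext d
    simp only [Set.mem_setOf_eq, Finset.coe_sort_coe, Finset.mem_coe]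
    exact (hVmem d).symm
  have hdelta : deltaE E = vmin / vmax := by
    unfold deltaE
    rw [hsetV, hVne.csInf_eq_min', hVne.csSup_eq_max']
  set N : ℕ := n.choose 2 with hN
  have hNpos : 0 < N := Nat.choose_pos hA
  have hNne : ((N:ℝ)) ≠ 0 := by exact_mod_cast hNpos.ne'
  have hNcast : (N:ℝ) = (n:ℝ) * ((n:ℝ) - 1) / 2 := by
    rw [hN, Nat.choose_two_right,
      Nat.cast_div (Nat.even_mul_pred_self n).two_dvd (by norm_num),
      Nat.cast_mul, Nat.cast_sub (by omega : 1 ≤ n)]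
    norm_num
  have hδ1 : δ < 1 := by
    refine lt_of_lt_of_le hδ (Real.rpow_le_one_of_one_le_of_nonpos hn1.le ?_)
    have h0 : (0:ℝ) ≤ (n:ℝ) * ((n:ℝ) - 1) * p := by nlinarith
    linarith
  set K : ℝ := δ ^ (-(N:ℝ)⁻¹) with hK
  have hK1 : 1 < K := by
    rw [hK, Real.one_lt_rpow_iff_of_pos hδ0]
    refine Or.inr ⟨hδ1, ?_⟩
    simp only [Left.neg_neg_iff]
    exact inv_pos.mpr (by exact_mod_cast hNpos)
  have hKN : K ^ N = δ⁻¹ := by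
    rw [hK, ← Real.rpow_natCast (δ ^ (-(N:ℝ)⁻¹)) N, ← Real.rpow_mul hδ0.le,
      neg_mul, inv_mul_cancel₀ hNne]
    exact Real.rpow_neg_one δ
  have hnp0 : (0:ℝ) < (n:ℝ) ^ p := Real.rpow_pos_of_pos (by linarith) p
  have hnpK : (n:ℝ) ^ p < K := by
    have hEq : ((n:ℝ) ^ p) ^ (-(N:ℝ)) = (n:ℝ) ^ (-((n:ℝ)*((n:ℝ)-1)*p)/2) := by
      rw [← Real.rpow_mul (by linarith : (0:ℝ) ≤ (n:ℝ))]
      congr 1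
      rw [hNcast]; ring
    have h1 : δ < ((n:ℝ)^p) ^ (-(N:ℝ)) := by rw [hEq]; exact hδ
    have hz : (-(N:ℝ)⁻¹) < 0 := by
      simp only [Left.neg_neg_iff]
      exact inv_pos.mpr (by exact_mod_cast hNpos)
    have h2 := Real.rpow_lt_rpow_of_neg hδ0 h1 hz
    rw [← Real.rpow_mul hnp0.le,
      show (-(N:ℝ)) * (-(N:ℝ)⁻¹) = 1 from by field_simp,
      Real.rpow_one] at h2
    exact h2
  have hvmaxpos : 0 < vmax := hVpos _ (V.max'_mem hVne)
  have hcardV : V.card ≤ N := by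
    calc V.card ≤ D.card := Finset.card_image_le
      _ = N := by
        rw [hD, hN, ← Sym2.card_subtype_not_diag (α := A)]
        exact (Fintype.card_subtype _).symm
  have hHfail : ¬ (∀ a ∈ V, a < vmax → ∃ b ∈ V, a < b ∧ b ≤ K * a) := by
    intro H
    have hb := gap_pigeonhole V hVne K hK1.le hVpos H N vmin (V.min'_mem hVne)
      (le_trans (Finset.card_le_card (Finset.filter_subset _ _)) hcardV)
    rw [hKN] at hb
    have hvm : vmin < δ * vmax := (div_lt_iff₀ hvmaxpos).mp (hdelta ▸ hsmall)
    have hcon : vmax < vmax := by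
      calc vmax ≤ δ⁻¹ * vmin := hb
        _ < δ⁻¹ * (δ * vmax) := mul_lt_mul_of_pos_left hvm (inv_pos.mpr hδ0)
        _ = vmax := by field_simp
    exact lt_irrefl _ hcon
  push_neg at hHfail
  obtain ⟨t, htV, htmax, hgap0⟩ := hHfail
  have htpos : 0 < t := hVpos t htV
  have hgap : ∀ v ∈ V, v ≤ t ∨ K * t < v := by
    intro v hv
    rcases le_or_gt v t with h | h
    · exact Or.inl h
    · exact Or.inr (hgap0 v hv h)
  set J : A → A → Prop := fun x y => x = y ∨ rRes E x y ≤ t with hJ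
  have h2p : (2:ℝ) ^ p ≤ (n:ℝ) ^ p := Real.rpow_le_rpow (by norm_num) hn2 hp0.le
  have htrans_bound : ∀ x y z : A, x ≠ y → y ≠ z → x ≠ z →
      rRes E x y ≤ t → rRes E y z ≤ t → rRes E x z ≤ t := by
    intro x y z hxy hyz hxz h1 h2
    have ha := cE_pos hE hxy
    have hb := cE_pos hE hyz
    have hchain := cE_chain hE hp0 (x := x) (z := z) y hxz
    have hminpos : 0 < min (cE E x y) (cE E y z) := lt_min ha hb
    have hlhspos : 0 < (2:ℝ)^(-p) * min (cE E x y) (cE E y z) :=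
      mul_pos (Real.rpow_pos_of_pos two_pos _) hminpos
    have hinv : rRes E x z ≤ ((2:ℝ)^(-p) * min (cE E x y) (cE E y z))⁻¹ := by
      rw [hrfl]
      exact inv_anti₀ hlhspos hchain
    have hmininv : (min (cE E x y) (cE E y z))⁻¹ ≤ t := by
      rcases le_total (cE E x y) (cE E y z) with h | h
      · rw [min_eq_left h]; rw [hrfl] at h1; exact h1
      · rw [min_eq_right h]; rw [hrfl] at h2; exact h2
    have hRxz : rRes E x z ≤ (2:ℝ)^p * t := by
      calc rRes E x z ≤ ((2:ℝ)^(-p))⁻¹ * (min (cE E x y) (cE E y z))⁻¹ := by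
            rw [← mul_inv]; exact hinv
        _ = (2:ℝ)^p * (min (cE E x y) (cE E y z))⁻¹ := by
            rw [Real.rpow_neg (by norm_num : (0:ℝ) ≤ 2), inv_inv]
        _ ≤ (2:ℝ)^p * t :=
            mul_le_mul_of_nonneg_left hmininv (Real.rpow_nonneg (by norm_num) _)
    have hlt : rRes E x z < K * t := by
      calc rRes E x z ≤ (2:ℝ)^p * t := hRxz
        _ ≤ (n:ℝ)^p * t := mul_le_mul_of_nonneg_right h2p htpos.le
        _ < K * t := mul_lt_mul_of_pos_right hnpK htpos
    rcases hgap _ ((hVmem _).mpr ⟨x, z, hxz, rfl⟩) with h | h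
    · exact h
    · linarith
  have hequiv : Equivalence J := by
    constructor
    · intro x; exact Or.inl rfl
    · intro x y hxy
      rcases hxy with h | h
      · exact Or.inl h.symm
      · refine Or.inr ?_
        rw [← hsymm]; exact h
    · intro x y z hxy hyz
      by_cases hxz : x = z
      · exact Or.inl hxz
      rcases hxy with rfl | h1
      · exact hyz
      rcases hyz with rfl | h2
      · exact Or.inr h1
      by_cases hxy' : x = y
      · subst hxy'; exact Or.inr h2
      by_cases hyz' : y = z
      · subst hyz'; exact Or.inr h1
      · exact Or.inr (htrans_bound x y z hxy' hyz' hxz h1 h2)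
  obtain ⟨x₁, y₁, hxy₁, ht_eq⟩ := (hVmem t).mp htV
  obtain ⟨x₂, y₂, hxy₂, hmax_eq⟩ := (hVmem vmax).mp (V.max'_mem hVne)
  have hJ1 : J x₁ y₁ := Or.inr (le_of_eq ht_eq.symm)
  have hnJ2 : ¬ J x₂ y₂ := by
    rintro (h | h)
    · exact hxy₂ h
    · rw [← hmax_eq] at h
      linarith
  have hS1 : sSup {d : ℝ | ∃ x y : A, x ≠ y ∧ J x y ∧ d = rRes E x y} ≤ t := by
    apply Real.sSup_le _ htpos.le
    rintro d ⟨x, y, hxy, hJxy, rfl⟩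
    rcases hJxy with h | h
    · exact absurd h hxy
    · exact h
  have hS2ne : {d : ℝ | ∃ x y : A, ¬ J x y ∧ d = rRes E x y}.Nonempty :=
    ⟨vmax, x₂, y₂, hnJ2, hmax_eq⟩
  have hS2 : K * t ≤ sInf {d : ℝ | ∃ x y : A, ¬ J x y ∧ d = rRes E x y} := by
    apply le_csInf hS2ne
    rintro d ⟨x, y, hnJxy, rfl⟩
    have hxy : x ≠ y := fun h => hnJxy (Or.inl h)
    have hnle : ¬ rRes E x y ≤ t := fun h => hnJxy (Or.inr h)
    rcases hgap _ ((hVmem _).mpr ⟨x, y, hxy, rfl⟩) with h | h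
    · exact absurd h hnle
    · exact h.le
  have hKt : 0 < K * t := mul_pos (lt_trans one_pos hK1) htpos
  refine ⟨J, ⟨hequiv, ⟨x₁, y₁, hxy₁, hJ1⟩, ⟨x₂, y₂, hnJ2⟩⟩, ?_⟩
  have hfin : deltaJ E J ≤ K⁻¹ := by
    unfold deltaJ
    calc sSup {d : ℝ | ∃ x y : A, x ≠ y ∧ J x y ∧ d = rRes E x y} /
        sInf {d : ℝ | ∃ x y : A, ¬ J x y ∧ d = rRes E x y}
        ≤ t / (K * t) := div_le_div₀ htpos.le hS1 hKt hS2
      _ = K⁻¹ := by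
          rw [mul_comm K t, div_mul_eq_div_div, div_self htpos.ne', one_div]
  have hKinv : K⁻¹ = δ ^ ((N:ℝ)⁻¹) := by
    have h : K = (δ ^ ((N:ℝ)⁻¹))⁻¹ := by rw [hK, Real.rpow_neg hδ0.le]
    rw [h, inv_inv]
  have hexp : 2 / ((n:ℝ) * ((n:ℝ) - 1)) = (N:ℝ)⁻¹ := by
    rw [hNcast, inv_div]
  calc deltaJ E J ≤ K⁻¹ := hfin
    _ = δ ^ (2 / ((n:ℝ) * ((n:ℝ) - 1))) := by rw [hKinv, hexp]
    _ < δ ^ (2 / ((n:ℝ) * ((n:ℝ) - 1))) * (n:ℝ) ^ p := by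
        refine lt_mul_of_one_lt_right (Real.rpow_pos_of_pos hδ0 _) ?_
        exact (Real.one_lt_rpow_iff_of_pos (by linarith)).mpr (Or.inl ⟨hn1, hp0⟩)
end

section
/- Let E₁, E₂ be nondegenerate p-energies on V₀ and T the renormalization map as above. Then inf(T E₁ | E₁) ≤ sup(T E₂ | E₂). -/
/-- `Λ E (g) = Σᵢ rᵢ⁻¹ E (g ∘ Fᵢ)`. -/
noncomputable def lamE {V0 V1 : Type*} (N : ℕ) (F : Fin N → V0 → V1)
    (r : Fin N → ℝ) (E : (V0 → ℝ) → ℝ) : (V1 → ℝ) → ℝ :=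
  fun g => ∑ i : Fin N, (r i)⁻¹ * E (fun x => g (F i x))

/-- The trace to `V₀` (embedded via `ι`) of a functional on `V₁`. -/
noncomputable def trE {V0 V1 : Type*} (ι : V0 → V1)
    (Λ : (V1 → ℝ) → ℝ) : (V0 → ℝ) → ℝ :=
  fun f => sInf {e : ℝ | ∃ g : V1 → ℝ, (∀ x : V0, g (ι x) = f x) ∧ Λ g = e}

/-- The renormalization map `T E = [Λ E]_{V₀}`. -/
noncomputable def renorm {V0 V1 : Type*} (ι : V0 → V1) (N : ℕ)
    (F : Fin N → V0 → V1) (r : Fin N → ℝ) (E : (V0 → ℝ) → ℝ) :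
    (V0 → ℝ) → ℝ :=
  trE ι (lamE N F r E)

/-- `sup(E|E') = sup { E f / E' f : E f + E' f > 0 }`. -/
noncomputable def supRatio {X : Type*} (E E' : (X → ℝ) → ℝ) : ℝ :=
  sSup {d : ℝ | ∃ f : X → ℝ, 0 < E f + E' f ∧ d = E f / E' f}

/-- `inf(E|E') = inf { E f / E' f : E f + E' f > 0 }`. -/
noncomputable def infRatio {X : Type*} (E E' : (X → ℝ) → ℝ) : ℝ :=
  sInf {d : ℝ | ∃ f : X → ℝ, 0 < E f + E' f ∧ d = E f / E' f}

/-! ### Auxiliary lemmas -/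

set_option linter.unusedSectionVars false
set_option linter.unusedVariables false

section AuxConvex

/-- A function that is convex in the open-coefficient sense is convex. -/
lemma aux_convexOn_of_strict {A : Type*} [Fintype A] (Q : (A → ℝ) → ℝ)
    (h : ∀ f g : A → ℝ, ∀ t : ℝ, 0 < t → t < 1 →
      Q (fun x => t * f x + (1 - t) * g x) ≤ t * Q f + (1 - t) * Q g) :
    ConvexOn ℝ Set.univ Q := by
  refine ⟨convex_univ, fun f _ g _ a b ha hb hab => ?_⟩
  have hb' : b = 1 - a := by linarith
  subst hb'
  obtain rfl | ha' := ha.eq_or_lt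
  · simp
  obtain rfl | ha1 := (show a ≤ 1 by linarith).eq_or_lt
  · simp
  · have := h f g a ha' ha1
    have heq : a • f + (1-a) • g = fun x => a * f x + (1-a) * g x := by
      funext x; simp [smul_eq_mul]
    rw [heq]; exact this

lemma aux_continuous_of_convexOn {A : Type*} [Fintype A] (Q : (A → ℝ) → ℝ)
    (h : ConvexOn ℝ Set.univ Q) : Continuous Q := by
  rw [← continuousOn_univ]
  exact h.continuousOn isOpen_univ

end AuxConvex

section AuxCompare

variable {V0 : Type*} [Fintype V0] {p : ℝ}

/-- Comparability: a continuous, `p`-homogeneous, translation-invariant functional is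
dominated by a multiple of a nondegenerate `p`-energy. -/
theorem aux_compare (hp : 0 < p) {x₀ x₁ : V0} (hne : x₀ ≠ x₁)
    (Q E' : (V0 → ℝ) → ℝ)
    (hQcont : Continuous Q)
    (hQh : ∀ (f : V0 → ℝ) (t : ℝ), Q (fun x => t * f x) = |t| ^ p * Q f)
    (hQa : ∀ (f : V0 → ℝ) (c : ℝ), Q (fun x => f x + c) = Q f)
    (hE' : IsPEnergy p E') :
    ∃ M : ℝ, 0 ≤ M ∧ ∀ f, Q f ≤ M * E' f := by
  classical
  obtain ⟨hE'nn, hE'conv, hE'h, hE'a, -, hE'z⟩ := hE'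
  have hE'convex : ConvexOn ℝ Set.univ E' := aux_convexOn_of_strict E' hE'conv
  have hE'cont : Continuous E' := aux_continuous_of_convexOn E' hE'convex
  have hQ0 : ∀ c : ℝ, Q (fun _ => c) = 0 := by
    intro c
    have h1 : Q (fun _ : V0 => (0:ℝ)) = 0 := by
      have := hQh (fun _ => 0) 0
      simp only [zero_mul] at this
      rw [this, abs_zero, Real.zero_rpow hp.ne', zero_mul]
    have h2 := hQa (fun _ => 0) c
    simp only [zero_add] at h2
    rw [h2, h1]
  set K : Set (V0 → ℝ) := {f | f x₀ = 0 ∧ ‖f‖ = 1} with hK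
  have hKclosed : IsClosed K :=
    (isClosed_eq (continuous_apply x₀) continuous_const).inter
      (isClosed_eq continuous_norm continuous_const)
  have hKbdd : Bornology.IsBounded K := by
    rw [Metric.isBounded_iff_subset_closedBall 0]
    exact ⟨1, fun f hf => by simp [Metric.mem_closedBall, dist_zero_right, hf.2]⟩
  have hKcompact : IsCompact K := Metric.isCompact_of_isClosed_isBounded hKclosed hKbdd
  set f₁ : V0 → ℝ := fun x => if x = x₁ then (1:ℝ) else 0 with hf₁
  have hf₁K : f₁ ∈ K := by
    constructor
    · simp [hf₁, hne]
    · refine le_antisymm ?_ ?_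
      · refine (pi_norm_le_iff_of_nonneg zero_le_one).2 fun x => ?_
        by_cases h : x = x₁ <;> simp [hf₁, h]
      · have := norm_le_pi_norm f₁ x₁
        simpa [hf₁] using this
  have hE'pos : ∀ f ∈ K, 0 < E' f := by
    intro f hf
    rcases (hE'nn f).eq_or_lt with h | h
    · exfalso
      obtain ⟨c, hc⟩ := (hE'z f).1 h.symm
      have hc0 : c = 0 := by rw [← hc x₀]; exact hf.1
      have : f = 0 := funext fun x => by rw [hc x, hc0]; rfl
      rw [hK] at hf
      simp [this] at hf
    · exact h
  obtain ⟨k, hkK, hk⟩ := hKcompact.exists_isMaxOn ⟨f₁, hf₁K⟩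
    ((hQcont.continuousOn).div (hE'cont.continuousOn) fun f hf => (hE'pos f hf).ne')
  refine ⟨max (Q k / E' k) 0, le_max_right _ _, fun f => ?_⟩
  set M := max (Q k / E' k) 0 with hM
  by_cases hfc : ∃ c, ∀ x, f x = c
  · obtain ⟨c, hc⟩ := hfc
    have hf : f = fun _ => c := funext hc
    rw [hf, hQ0 c, (hE'z _).2 ⟨c, fun _ => rfl⟩, mul_zero]
  · set g : V0 → ℝ := fun x => f x - f x₀ with hg
    have hQfg : Q f = Q g := by
      have := hQa g (f x₀)
      have heq : (fun x => g x + f x₀) = f := funext fun x => by simp [hg]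
      rw [heq] at this
      exact this.symm.symm
    have hE'fg : E' f = E' g := by
      have := hE'a g (f x₀)
      have heq : (fun x => g x + f x₀) = f := funext fun x => by simp [hg]
      rw [heq] at this
      exact this.symm.symm
    have hgne : g ≠ 0 := by
      intro h0
      apply hfc
      refine ⟨f x₀, fun x => ?_⟩
      have := congrFun h0 x
      simp [hg] at this
      linarith
    have ht : 0 < ‖g‖ := norm_pos_iff.2 hgne
    set t := ‖g‖ with htd
    set h : V0 → ℝ := fun x => t⁻¹ * g x with hh
    have hhK : h ∈ K := by
      constructor
      · simp [hh, hg]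
      · have : h = t⁻¹ • g := funext fun x => by simp [hh]
        rw [this, norm_smul, norm_inv, Real.norm_eq_abs, abs_of_pos ht]
        exact inv_mul_cancel₀ ht.ne'
    have hgh : g = fun x => t * h x := funext fun x => by
      simp [hh]
      rw [← mul_assoc, mul_inv_cancel₀ ht.ne', one_mul]
    have hQh' : Q g = t ^ p * Q h := by
      rw [hgh, hQh h t, abs_of_pos ht]
    have hE'h' : E' g = t ^ p * E' h := by
      rw [hgh, hE'h h t, abs_of_pos ht]
    have hQhle : Q h ≤ M * E' h := by
      have h1 : Q h / E' h ≤ M := le_trans (hk hhK) (le_max_left _ _)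
      have := (div_le_iff₀ (hE'pos h hhK)).1 h1
      linarith [this]
    have htp : (0:ℝ) ≤ t ^ p := Real.rpow_nonneg ht.le p
    calc Q f = t ^ p * Q h := by rw [hQfg, hQh']
    _ ≤ t ^ p * (M * E' h) := mul_le_mul_of_nonneg_left hQhle htp
    _ = M * (t ^ p * E' h) := by ring
    _ = M * E' f := by rw [← hE'h', hE'fg]

end AuxCompare

section Renorm

variable {V0 V1 : Type*} [Fintype V0] [Fintype V1]
  {ι : V0 → V1} {N : ℕ} {F : Fin N → V0 → V1} {r : Fin N → ℝ}
  {p : ℝ} {E : (V0 → ℝ) → ℝ}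

/-- The set of values of `Λ E` over extensions of `f`. -/
def extSet (ι : V0 → V1) (N : ℕ) (F : Fin N → V0 → V1) (r : Fin N → ℝ)
    (E : (V0 → ℝ) → ℝ) (f : V0 → ℝ) : Set ℝ :=
  {e : ℝ | ∃ g : V1 → ℝ, (∀ x : V0, g (ι x) = f x) ∧ lamE N F r E g = e}

lemma renorm_eq (f : V0 → ℝ) : renorm ι N F r E f = sInf (extSet ι N F r E f) := rfl

open scoped Classical in
noncomputable def extFun (ι : V0 → V1) (f : V0 → ℝ) : V1 → ℝ :=
  fun v => if h : ∃ x, ι x = v then f h.choose else 0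

lemma extFun_spec (hι : Function.Injective ι) (f : V0 → ℝ) (x : V0) :
    extFun ι f (ι x) = f x := by
  have h : ∃ y, ι y = ι x := ⟨x, rfl⟩
  simp only [extFun, dif_pos h]
  exact congrArg f (hι h.choose_spec)

lemma extSet_nonempty (hι : Function.Injective ι) (f : V0 → ℝ) :
    (extSet ι N F r E f).Nonempty :=
  ⟨lamE N F r E (extFun ι f), extFun ι f, extFun_spec hι f, rfl⟩

lemma lamE_nonneg (hr : ∀ i, 0 < r i) (hE : ∀ h, 0 ≤ E h) (g : V1 → ℝ) :
    0 ≤ lamE N F r E g :=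
  Finset.sum_nonneg fun i _ => mul_nonneg (inv_nonneg.2 (hr i).le) (hE _)

lemma extSet_bddBelow (hr : ∀ i, 0 < r i) (hE : ∀ h, 0 ≤ E h) (f : V0 → ℝ) :
    BddBelow (extSet ι N F r E f) :=
  ⟨0, fun e ⟨g, _, hg⟩ => hg ▸ lamE_nonneg hr hE g⟩

lemma renorm_nonneg (hι : Function.Injective ι) (hr : ∀ i, 0 < r i)
    (hE : ∀ h, 0 ≤ E h) (f : V0 → ℝ) : 0 ≤ renorm ι N F r E f :=
  le_csInf (extSet_nonempty hι f) fun e ⟨g, _, hg⟩ => hg ▸ lamE_nonneg hr hE g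

lemma renorm_le (hr : ∀ i, 0 < r i) (hE : ∀ h, 0 ≤ E h) {f : V0 → ℝ}
    {g : V1 → ℝ} (hg : ∀ x, g (ι x) = f x) :
    renorm ι N F r E f ≤ lamE N F r E g :=
  csInf_le (extSet_bddBelow hr hE f) ⟨g, hg, rfl⟩

lemma renorm_const (hι : Function.Injective ι) (hr : ∀ i, 0 < r i)
    (hE : IsPEnergy p E) {f : V0 → ℝ} (hf : ∃ c, ∀ x, f x = c) :
    renorm ι N F r E f = 0 := by
  obtain ⟨c, hc⟩ := hf
  refine le_antisymm ?_ (renorm_nonneg hι hr hE.1 f)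
  have h1 : renorm ι N F r E f ≤ lamE N F r E (fun _ => c) :=
    renorm_le hr hE.1 fun x => (hc x).symm
  have h2 : lamE N F r E (fun _ => c) = 0 := by
    unfold lamE
    refine Finset.sum_eq_zero fun i _ => ?_
    rw [(hE.2.2.2.2.2 _).2 ⟨c, fun _ => rfl⟩, mul_zero]
  rw [h2] at h1
  exact h1

lemma renorm_le_mul (hι : Function.Injective ι) (hr : ∀ i, 0 < r i)
    {Ea Eb : (V0 → ℝ) → ℝ} (hEa : ∀ h, 0 ≤ Ea h) (hEb : ∀ h, 0 ≤ Eb h)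
    {μ : ℝ} (hμ : 0 ≤ μ) (hle : ∀ h, Ea h ≤ μ * Eb h) (f : V0 → ℝ) :
    renorm ι N F r Ea f ≤ μ * renorm ι N F r Eb f := by
  have key : ∀ g : V1 → ℝ, (∀ x, g (ι x) = f x) →
      renorm ι N F r Ea f ≤ μ * lamE N F r Eb g := by
    intro g hg
    refine (renorm_le hr hEa hg).trans ?_
    unfold lamE
    rw [Finset.mul_sum]
    refine Finset.sum_le_sum fun i _ => ?_
    rw [← mul_assoc, mul_comm μ, mul_assoc]
    exact mul_le_mul_of_nonneg_left (hle _) (inv_nonneg.2 (hr i).le)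
  rcases hμ.eq_or_lt with rfl | hμ'
  · have := key (extFun ι f) (extFun_spec hι f)
    simpa using this
  · rw [mul_comm, ← div_le_iff₀ hμ']
    refine le_csInf (extSet_nonempty hι f) fun e ⟨g, hg, hge⟩ => ?_
    rw [div_le_iff₀ hμ', mul_comm]
    exact hge ▸ key g hg

lemma renorm_addConst (hι : Function.Injective ι) (hE : IsPEnergy p E)
    (f : V0 → ℝ) (c : ℝ) :
    renorm ι N F r E (fun x => f x + c) = renorm ι N F r E f := by
  rw [renorm_eq, renorm_eq]
  congr 1
  ext e
  constructor
  · rintro ⟨g, hg, hge⟩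
    refine ⟨fun v => g v - c, fun x => by have := hg x; simp only at this ⊢; linarith, ?_⟩
    rw [← hge]
    unfold lamE
    refine Finset.sum_congr rfl fun i _ => ?_
    congr 1
    have := hE.2.2.2.1 (fun x => g (F i x) - c) c
    simp only [sub_add_cancel] at this
    exact this.symm
  · rintro ⟨g, hg, hge⟩
    refine ⟨fun v => g v + c, fun x => by have := hg x; simp only at this ⊢; linarith, ?_⟩
    rw [← hge]
    unfold lamE
    refine Finset.sum_congr rfl fun i _ => ?_
    congr 1
    exact hE.2.2.2.1 (fun x => g (F i x)) c

lemma lamE_smul (hE : IsPEnergy p E) (t : ℝ) (g : V1 → ℝ) :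
    lamE N F r E (fun v => t * g v) = |t| ^ p * lamE N F r E g := by
  unfold lamE
  rw [Finset.mul_sum]
  refine Finset.sum_congr rfl fun i _ => ?_
  rw [hE.2.2.1 (fun x => g (F i x)) t]
  ring

lemma renorm_smul (hι : Function.Injective ι) (hr : ∀ i, 0 < r i) (hp : 0 < p)
    (hE : IsPEnergy p E) (t : ℝ) (f : V0 → ℝ) :
    renorm ι N F r E (fun x => t * f x) = |t| ^ p * renorm ι N F r E f := by
  rcases eq_or_ne t 0 with rfl | ht
  · rw [abs_zero, Real.zero_rpow hp.ne', zero_mul]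
    exact renorm_const hι hr hE ⟨0, fun x => by simp⟩
  have htp : (0:ℝ) < |t| ^ p := Real.rpow_pos_of_pos (abs_pos.2 ht) p
  have le1 : ∀ (s : ℝ) (f : V0 → ℝ), s ≠ 0 →
      renorm ι N F r E (fun x => s * f x) ≤ |s| ^ p * renorm ι N F r E f := by
    intro s f hs
    have hsp : (0:ℝ) < |s| ^ p := Real.rpow_pos_of_pos (abs_pos.2 hs) p
    rw [mul_comm, ← div_le_iff₀ hsp]
    refine le_csInf (extSet_nonempty hι f) fun e ⟨g, hg, hge⟩ => ?_
    rw [div_le_iff₀ hsp, mul_comm, ← hge, ← lamE_smul hE]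
    exact renorm_le hr hE.1 fun x => by rw [hg x]
  refine le_antisymm (le1 t f ht) ?_
  have := le1 t⁻¹ (fun x => t * f x) (inv_ne_zero ht)
  have heq : (fun x => t⁻¹ * (t * f x)) = f := funext fun x => by
    rw [← mul_assoc, inv_mul_cancel₀ ht, one_mul]
  rw [heq, abs_inv, Real.inv_rpow (abs_nonneg t)] at this
  calc |t| ^ p * renorm ι N F r E f
      ≤ |t| ^ p * ((|t| ^ p)⁻¹ * renorm ι N F r E fun x => t * f x) :=
        mul_le_mul_of_nonneg_left this htp.le
    _ = renorm ι N F r E fun x => t * f x := by field_simp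

lemma renorm_convex_ineq (hι : Function.Injective ι) (hr : ∀ i, 0 < r i)
    (hE : IsPEnergy p E) (f₁ f₂ : V0 → ℝ) (t : ℝ) (ht0 : 0 < t) (ht1 : t < 1) :
    renorm ι N F r E (fun x => t * f₁ x + (1 - t) * f₂ x) ≤
      t * renorm ι N F r E f₁ + (1 - t) * renorm ι N F r E f₂ := by
  refine le_of_forall_pos_le_add fun ε hε => ?_
  obtain ⟨e₁, ⟨g₁, hg₁, hge₁⟩, he₁⟩ := exists_lt_of_csInf_lt (extSet_nonempty hι f₁)
    (lt_add_of_pos_right (sInf (extSet ι N F r E f₁)) (by positivity : (0:ℝ) < ε/2))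
  obtain ⟨e₂, ⟨g₂, hg₂, hge₂⟩, he₂⟩ := exists_lt_of_csInf_lt (extSet_nonempty hι f₂)
    (lt_add_of_pos_right (sInf (extSet ι N F r E f₂)) (by positivity : (0:ℝ) < ε/2))
  have hext : ∀ x, (fun v => t * g₁ v + (1 - t) * g₂ v) (ι x)
      = t * f₁ x + (1 - t) * f₂ x := by
    intro x; simp only; rw [hg₁ x, hg₂ x]
  have h1 : renorm ι N F r E (fun x => t * f₁ x + (1 - t) * f₂ x) ≤
      lamE N F r E (fun v => t * g₁ v + (1 - t) * g₂ v) := renorm_le hr hE.1 hext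
  have h2 : lamE N F r E (fun v => t * g₁ v + (1 - t) * g₂ v) ≤
      t * lamE N F r E g₁ + (1 - t) * lamE N F r E g₂ := by
    unfold lamE
    rw [Finset.mul_sum, Finset.mul_sum, ← Finset.sum_add_distrib]
    refine Finset.sum_le_sum fun i _ => ?_
    have hc := hE.2.1 (fun x => g₁ (F i x)) (fun x => g₂ (F i x)) t ht0 ht1
    have hrn : (0:ℝ) ≤ (r i)⁻¹ := inv_nonneg.2 (hr i).le
    calc (r i)⁻¹ * E (fun x => t * g₁ (F i x) + (1 - t) * g₂ (F i x))
        ≤ (r i)⁻¹ * (t * E (fun x => g₁ (F i x)) + (1 - t) * E (fun x => g₂ (F i x))) :=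
          mul_le_mul_of_nonneg_left hc hrn
      _ = t * ((r i)⁻¹ * E (fun x => g₁ (F i x)))
          + (1 - t) * ((r i)⁻¹ * E (fun x => g₂ (F i x))) := by ring
  rw [← hge₁] at he₁
  rw [← hge₂] at he₂
  have m1 : t * lamE N F r E g₁ ≤ t * (renorm ι N F r E f₁ + ε/2) :=
    mul_le_mul_of_nonneg_left he₁.le ht0.le
  have m2 : (1 - t) * lamE N F r E g₂ ≤ (1 - t) * (renorm ι N F r E f₂ + ε/2) :=
    mul_le_mul_of_nonneg_left he₂.le (by linarith)
  nlinarith [h1, h2, m1, m2]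

lemma renorm_convexOn (hι : Function.Injective ι) (hr : ∀ i, 0 < r i)
    (hE : IsPEnergy p E) : ConvexOn ℝ Set.univ (renorm ι N F r E) :=
  aux_convexOn_of_strict _ fun f g t ht0 ht1 => renorm_convex_ineq hι hr hE f g t ht0 ht1

end Renorm

/-- For nondegenerate `p`-energies `E₁, E₂` on `V₀`:
`inf(T E₁ | E₁) ≤ sup(T E₂ | E₂)`. -/
theorem infRatio_renorm_le_supRatio_renorm {V0 V1 : Type*}
    [Fintype V0] [Fintype V1]
    (ι : V0 → V1) (hι : Function.Injective ι)
    (N : ℕ) (hN : 2 ≤ N) (F : Fin N → V0 → V1)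
    (hF : ∀ i, Function.Injective (F i))
    (r : Fin N → ℝ) (hr : ∀ i, 0 < r i)
    (p : ℝ) (hp : 1 < p)
    (E₁ E₂ : (V0 → ℝ) → ℝ) (h₁ : IsPEnergy p E₁) (h₂ : IsPEnergy p E₂) :
    infRatio (renorm ι N F r E₁) E₁ ≤ supRatio (renorm ι N F r E₂) E₂ := by
  classical
  have hp0 : 0 < p := lt_trans one_pos hp
  set T₁ := renorm ι N F r E₁ with hT₁
  set T₂ := renorm ι N F r E₂ with hT₂
  by_cases hV : ∃ x₀ x₁ : V0, x₀ ≠ x₁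
  case neg =>
    -- every function on V0 is constant; both sets are empty
    push_neg at hV
    have hconst : ∀ f : V0 → ℝ, ∃ c, ∀ x, f x = c := by
      intro f
      by_cases h0 : Nonempty V0
      · obtain ⟨x⟩ := h0
        exact ⟨f x, fun y => by rw [hV y x]⟩
      · exact ⟨0, fun x => absurd ⟨x⟩ h0⟩
    have hS1 : {d : ℝ | ∃ f : V0 → ℝ, 0 < T₁ f + E₁ f ∧ d = T₁ f / E₁ f} = ∅ := by
      ext d
      simp only [Set.mem_setOf_eq, Set.mem_empty_iff_false, iff_false, not_exists]
      rintro f ⟨hpos, -⟩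
      have h0 : T₁ f = 0 := renorm_const hι hr h₁ (hconst f)
      rw [(h₁.2.2.2.2.2 f).2 (hconst f), h0] at hpos
      simp at hpos
    have hS2 : {d : ℝ | ∃ f : V0 → ℝ, 0 < T₂ f + E₂ f ∧ d = T₂ f / E₂ f} = ∅ := by
      ext d
      simp only [Set.mem_setOf_eq, Set.mem_empty_iff_false, iff_false, not_exists]
      rintro f ⟨hpos, -⟩
      have h0 : T₂ f = 0 := renorm_const hι hr h₂ (hconst f)
      rw [(h₂.2.2.2.2.2 f).2 (hconst f), h0] at hpos
      simp at hpos
    rw [infRatio, supRatio, hS1, hS2, Real.sInf_empty, Real.sSup_empty]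
  case pos =>
  obtain ⟨x₀, x₁, hne⟩ := hV
  -- a witness nonconstant function
  set f₀ : V0 → ℝ := fun x => if x = x₁ then (1:ℝ) else 0 with hf₀
  have hf₀nc : ¬ ∃ c, ∀ x, f₀ x = c := by
    rintro ⟨c, hc⟩
    have h1 := hc x₁
    have h2 := hc x₀
    simp [hf₀, hne] at h1 h2
    exact one_ne_zero (h1.trans h2.symm)
  have hE₁pos : 0 < E₁ f₀ :=
    (h₁.1 f₀).lt_of_ne fun h => hf₀nc ((h₁.2.2.2.2.2 f₀).1 h.symm)
  have hE₂pos : 0 < E₂ f₀ :=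
    (h₂.1 f₀).lt_of_ne fun h => hf₀nc ((h₂.2.2.2.2.2 f₀).1 h.symm)
  set S₁ := {d : ℝ | ∃ f : V0 → ℝ, 0 < T₁ f + E₁ f ∧ d = T₁ f / E₁ f} with hS₁
  set S₂ := {d : ℝ | ∃ f : V0 → ℝ, 0 < T₂ f + E₂ f ∧ d = T₂ f / E₂ f} with hS₂
  have hT₁nn : ∀ f, 0 ≤ T₁ f := renorm_nonneg hι hr h₁.1
  have hT₂nn : ∀ f, 0 ≤ T₂ f := renorm_nonneg hι hr h₂.1
  have hS₁ne : S₁.Nonempty :=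
    ⟨T₁ f₀ / E₁ f₀, f₀, by have := hT₁nn f₀; linarith, rfl⟩
  have hS₂ne : S₂.Nonempty :=
    ⟨T₂ f₀ / E₂ f₀, f₀, by have := hT₂nn f₀; linarith, rfl⟩
  have hS₁bdd : BddBelow S₁ := by
    refine ⟨0, fun d hd => ?_⟩
    obtain ⟨f, hpos, rfl⟩ := hd
    exact div_nonneg (hT₁nn f) (h₁.1 f)
  -- key positivity facts: if Eᵢ f = 0 then f constant and Tᵢ f = 0
  have hzero₁ : ∀ f : V0 → ℝ, E₁ f = 0 → T₁ f = 0 := fun f hf =>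
    renorm_const hι hr h₁ ((h₁.2.2.2.2.2 f).1 hf)
  have hzero₂ : ∀ f : V0 → ℝ, E₂ f = 0 → T₂ f = 0 := fun f hf =>
    renorm_const hι hr h₂ ((h₂.2.2.2.2.2 f).1 hf)
  -- T₂ is dominated by a multiple of E₂ (via compactness)
  have hT₂cont : Continuous T₂ :=
    aux_continuous_of_convexOn _ (renorm_convexOn hι hr h₂)
  obtain ⟨C, hC0, hC⟩ := aux_compare hp0 hne T₂ E₂ hT₂cont
    (fun f t => renorm_smul hι hr hp0 h₂ t f)
    (fun f c => renorm_addConst hι h₂ f c) h₂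
  have hS₂bdd : BddAbove S₂ := by
    refine ⟨C, fun d hd => ?_⟩
    obtain ⟨f, hpos, rfl⟩ := hd
    rcases (h₂.1 f).eq_or_lt with h | h
    · exfalso
      rw [← h, hzero₂ f h.symm] at hpos
      simp at hpos
    · exact (div_le_iff₀ h).2 (hC f)
  set a := infRatio T₁ E₁ with ha
  set b := supRatio T₂ E₂ with hb
  have ha_eq : a = sInf S₁ := rfl
  have hb_eq : b = sSup S₂ := rfl
  -- a * E₁ f ≤ T₁ f for all f
  have haE : ∀ f, a * E₁ f ≤ T₁ f := by
    intro f
    rcases (h₁.1 f).eq_or_lt with h | h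
    · rw [← h, mul_zero, hzero₁ f h.symm]
    · have hmem : T₁ f / E₁ f ∈ S₁ := ⟨f, by have := hT₁nn f; linarith, rfl⟩
      have : a ≤ T₁ f / E₁ f := csInf_le hS₁bdd hmem
      exact (le_div_iff₀ h).1 this
  -- T₂ f ≤ b * E₂ f for all f
  have hbE : ∀ f, T₂ f ≤ b * E₂ f := by
    intro f
    rcases (h₂.1 f).eq_or_lt with h | h
    · rw [← h, mul_zero, hzero₂ f h.symm]
    · have hmem : T₂ f / E₂ f ∈ S₂ := ⟨f, by have := hT₂nn f; linarith, rfl⟩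
      have : T₂ f / E₂ f ≤ b := le_csSup hS₂bdd hmem
      exact (div_le_iff₀ h).1 this
  have hb0 : 0 ≤ b := by
    have hmem : T₂ f₀ / E₂ f₀ ∈ S₂ := ⟨f₀, by have := hT₂nn f₀; linarith, rfl⟩
    exact le_trans (div_nonneg (hT₂nn f₀) (h₂.1 f₀)) (le_csSup hS₂bdd hmem)
  -- comparability of E₁ and E₂
  have hE₁cont : Continuous E₁ :=
    aux_continuous_of_convexOn _ (aux_convexOn_of_strict E₁ h₁.2.1)
  obtain ⟨M, hM0, hM⟩ := aux_compare hp0 hne E₁ E₂ hE₁cont h₁.2.2.1 h₁.2.2.2.1 h₂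
  set μset := {t : ℝ | 0 ≤ t ∧ ∀ f, E₁ f ≤ t * E₂ f} with hμset
  have hμne : μset.Nonempty := ⟨M, hM0, hM⟩
  have hμbdd : BddBelow μset := ⟨0, fun t ht => ht.1⟩
  set μ := sInf μset with hμ
  have hμ0 : 0 ≤ μ := le_csInf hμne fun t ht => ht.1
  have hμle : ∀ f, E₁ f ≤ μ * E₂ f := by
    intro f
    rcases (h₂.1 f).eq_or_lt with h | h
    · have hf : ∃ c, ∀ x, f x = c := (h₂.2.2.2.2.2 f).1 h.symm
      rw [(h₁.2.2.2.2.2 f).2 hf, ← h, mul_zero]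
    · have hlow : E₁ f / E₂ f ≤ μ :=
        le_csInf hμne fun t ht => (div_le_iff₀ h).2 (ht.2 f)
      exact (div_le_iff₀ h).1 hlow
  have hμpos : 0 < μ := by
    by_contra hc
    push_neg at hc
    have := hμle f₀
    nlinarith
  -- main contradiction
  by_contra hab
  push_neg at hab
  -- hab : b < a
  have ha0 : 0 < a := lt_of_le_of_lt hb0 hab
  have key : ∀ f, E₁ f ≤ (μ * b / a) * E₂ f := by
    intro f
    have c1 : a * E₁ f ≤ T₁ f := haE f
    have c2 : T₁ f ≤ μ * T₂ f := renorm_le_mul hι hr h₁.1 h₂.1 hμ0 hμle f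
    have c3 : μ * T₂ f ≤ μ * (b * E₂ f) := mul_le_mul_of_nonneg_left (hbE f) hμ0
    rw [div_mul_eq_mul_div, le_div_iff₀ ha0]
    nlinarith
  have hmem : μ * b / a ∈ μset := ⟨div_nonneg (mul_nonneg hμ0 hb0) ha0.le, key⟩
  have hle : μ ≤ μ * b / a := csInf_le hμbdd hmem
  rw [le_div_iff₀ ha0] at hle
  nlinarith
end
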